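/- arXiv:2307.06552 — 2 statements merged into one kernel-verified Lean document; each statement's English description precedes it below -/
import Mathlib

section
/- Convergence of the Jacobian of the estimating function. In the two-stage LAGO setup, let D U_n(β) denote the d × d matrix of partial derivatives of the map β ↦ U_n(β). For every sequence (β̃_n) of B-valued random vectors with β̃_n → β* in probability, −D U_n(β̃_n) → J(β*) in probability (entrywise), where J(β*) := Σ_{k=1,2} Σ_j α_{jk} h′(⟨β*, x_j^{(k)}⟩)² x_j^{(k)} (x_j^{(k)})ᵀ. -/
open MeasureTheory ProbabilityTheory Filter
open scoped RealInnerProductSpace BigOperators NNReal Topology ENNReal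

noncomputable section

/-- Concatenate `(1, a, z)` into a design vector in `ℝ^(1+P+Q)`. -/
def designVec {P Q : ℕ} (a : EuclideanSpace ℝ (Fin P)) (z : EuclideanSpace ℝ (Fin Q)) :
    EuclideanSpace ℝ (Fin (1 + P + Q)) :=
  (EuclideanSpace.equiv (Fin (1 + P + Q)) ℝ).symm
    (Fin.append (Fin.append ![(1 : ℝ)] ((EuclideanSpace.equiv (Fin P) ℝ) a))
      ((EuclideanSpace.equiv (Fin Q) ℝ) z))

/-- The two-stage LAGO setup. -/
structure LagoSetup (Ω : Type) [MeasurableSpace Ω] (Pr : Measure Ω) (J1 J2 P Q : ℕ) where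
  hJ1 : 1 ≤ J1
  hJ2 : 1 ≤ J2
  hP : 1 ≤ P
  hQ : 1 ≤ Q
  /-- stage-1 interventions -/
  a1 : Fin J1 → EuclideanSpace ℝ (Fin P)
  /-- stage-1 center covariates -/
  z1 : Fin J1 → EuclideanSpace ℝ (Fin Q)
  /-- limit stage-2 interventions -/
  a2 : Fin J2 → EuclideanSpace ℝ (Fin P)
  /-- stage-2 center covariates -/
  z2 : Fin J2 → EuclideanSpace ℝ (Fin Q)
  /-- random stage-2 interventions, for each total sample size `n` -/
  A2 : ℕ → Fin J2 → Ω → EuclideanSpace ℝ (Fin P)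
  measA2 : ∀ n j, Measurable (A2 n j)
  /-- per-center sample sizes, stage 1 -/
  n1 : ℕ → Fin J1 → ℕ
  /-- per-center sample sizes, stage 2 -/
  n2 : ℕ → Fin J2 → ℕ
  sum_sizes : ∀ n, (∑ j, n1 n j) + (∑ j, n2 n j) = n
  α1 : Fin J1 → ℝ
  α2 : Fin J2 → ℝ
  α1_pos : ∀ j, 0 < α1 j
  α2_pos : ∀ j, 0 < α2 j
  α1_lim : ∀ j, Tendsto (fun n : ℕ => (n1 n j : ℝ) / n) atTop (𝓝 (α1 j))
  α2_lim : ∀ j, Tendsto (fun n : ℕ => (n2 n j : ℝ) / n) atTop (𝓝 (α2 j))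
  /-- the mean function (inverse link) -/
  h : ℝ → ℝ
  h_smooth : ContDiff ℝ 2 h
  /-- the (compact) parameter space -/
  B : Set (EuclideanSpace ℝ (Fin (1 + P + Q)))
  B_compact : IsCompact B
  /-- the true parameter -/
  βstar : EuclideanSpace ℝ (Fin (1 + P + Q))
  βstar_mem : βstar ∈ B
  /-- stage-1 errors -/
  ε1 : Fin J1 → ℕ → Ω → ℝ
  /-- realized stage-2 errors -/
  ε2n : ℕ → Fin J2 → ℕ → Ω → ℝ
  /-- coupled i.i.d. stage-2 error arrays -/
  ε2 : Fin J2 → ℕ → Ω → ℝ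
  meas_ε1 : ∀ j i, Measurable (ε1 j i)
  meas_ε2n : ∀ n j i, Measurable (ε2n n j i)
  meas_ε2 : ∀ j i, Measurable (ε2 j i)
  /-- stage-1 error variances σ₁²(j) -/
  var1 : Fin J1 → ℝ
  /-- stage-2 error variances σ₂²(j) -/
  var2 : Fin J2 → ℝ
  /-- Assumption 3: convergence in probability of the stage-2 interventions -/
  A2_tendsto : ∀ j, TendstoInMeasure Pr (fun n => A2 n j) atTop (fun _ => a2 j)
  /-- Assumption 4: all interventions and errors take values in one compact set -/
  bound : ℝ
  A2_bdd : ∀ n j ω, ‖A2 n j ω‖ ≤ bound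
  ε1_bdd : ∀ j i ω, |ε1 j i ω| ≤ bound
  ε2n_bdd : ∀ n j i ω, |ε2n n j i ω| ≤ bound
  ε2_bdd : ∀ j i ω, |ε2 j i ω| ≤ bound
  /-- identical distribution within each error array -/
  ε1_ident : ∀ j i, IdentDistrib (ε1 j i) (ε1 j 0) Pr Pr
  ε2_ident : ∀ j i, IdentDistrib (ε2 j i) (ε2 j 0) Pr Pr
  ε1_mean : ∀ j i, ∫ ω, ε1 j i ω ∂Pr = 0
  ε2_mean : ∀ j i, ∫ ω, ε2 j i ω ∂Pr = 0
  ε1_var : ∀ j i, ∫ ω, (ε1 j i ω) ^ 2 ∂Pr = var1 j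
  ε2_var : ∀ j i, ∫ ω, (ε2 j i ω) ^ 2 ∂Pr = var2 j
  /-- all ε¹ and ε² variables are mutually independent -/
  ε_indep : iIndepFun
      (Sum.elim (fun p : Fin J1 × ℕ => fun ω => ε1 p.1 p.2 ω)
        (fun p : Fin J2 × ℕ => fun ω => ε2 p.1 p.2 ω)) Pr
  /-- the coupled ε² arrays are independent of (ε¹, (A_j^{(2,n)})_{j,n}) -/
  ε2_indep_rest : IndepFun
      (fun ω => (fun p : Fin J2 × ℕ => ε2 p.1 p.2 ω))
      (fun ω => ((fun p : Fin J1 × ℕ => ε1 p.1 p.2 ω),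
        (fun q : ℕ × Fin J2 => A2 q.1 q.2 ω))) Pr
  /-- Assumption 5: joint-law equality between realized and coupled errors -/
  jointLaw : ∀ n,
    Measure.map (fun ω => ((fun p : Fin J1 × ℕ => ε1 p.1 p.2 ω),
        (fun j => A2 n j ω), (fun p : Fin J2 × ℕ => ε2n n p.1 p.2 ω))) Pr
    = Measure.map (fun ω => ((fun p : Fin J1 × ℕ => ε1 p.1 p.2 ω),
        (fun j => A2 n j ω), (fun p : Fin J2 × ℕ => ε2 p.1 p.2 ω))) Pr

namespace LagoSetup

variable {Ω : Type} [MeasurableSpace Ω] {Pr : Measure Ω} {J1 J2 P Q : ℕ}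

/-- stage-1 design vectors x_j^{(1)} = (1, a_j^{(1)}, z_j^{(1)}) -/
def x1v (S : LagoSetup Ω Pr J1 J2 P Q) (j : Fin J1) : EuclideanSpace ℝ (Fin (1 + P + Q)) :=
  designVec (S.a1 j) (S.z1 j)

/-- limit stage-2 design vectors x_j^{(2)} = (1, a_j^{(2)}, z_j^{(2)}) -/
def x2v (S : LagoSetup Ω Pr J1 J2 P Q) (j : Fin J2) : EuclideanSpace ℝ (Fin (1 + P + Q)) :=
  designVec (S.a2 j) (S.z2 j)

/-- random stage-2 design vectors X_j^{(2,n)} = (1, A_j^{(2,n)}, z_j^{(2)}) -/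
def X2v (S : LagoSetup Ω Pr J1 J2 P Q) (n : ℕ) (j : Fin J2) (ω : Ω) :
    EuclideanSpace ℝ (Fin (1 + P + Q)) :=
  designVec (S.A2 n j ω) (S.z2 j)

/-- The LAGO estimating function U_n(β). -/
def U (S : LagoSetup Ω Pr J1 J2 P Q) (n : ℕ) (β : EuclideanSpace ℝ (Fin (1 + P + Q))) (ω : Ω) :
    EuclideanSpace ℝ (Fin (1 + P + Q)) :=
  (n : ℝ)⁻¹ •
    ((∑ j, ∑ i ∈ Finset.range (S.n1 n j),
        (deriv S.h ⟪β, S.x1v j⟫ *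
          (S.h ⟪S.βstar, S.x1v j⟫ + S.ε1 j i ω - S.h ⟪β, S.x1v j⟫)) • S.x1v j) +
      (∑ j, ∑ i ∈ Finset.range (S.n2 n j),
        (deriv S.h ⟪β, S.X2v n j ω⟫ *
          (S.h ⟪S.βstar, S.X2v n j ω⟫ + S.ε2n n j i ω - S.h ⟪β, S.X2v n j ω⟫)) •
          S.X2v n j ω))

/-- The deterministic limit u(β) of the estimating function. -/
def uLim (S : LagoSetup Ω Pr J1 J2 P Q) (β : EuclideanSpace ℝ (Fin (1 + P + Q))) :
    EuclideanSpace ℝ (Fin (1 + P + Q)) :=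
  (∑ j, (S.α1 j * deriv S.h ⟪β, S.x1v j⟫ *
      (S.h ⟪S.βstar, S.x1v j⟫ - S.h ⟪β, S.x1v j⟫)) • S.x1v j) +
    (∑ j, (S.α2 j * deriv S.h ⟪β, S.x2v j⟫ *
      (S.h ⟪S.βstar, S.x2v j⟫ - S.h ⟪β, S.x2v j⟫)) • S.x2v j)

/-- The limiting Jacobian matrix J(β*). -/
def Jmat (S : LagoSetup Ω Pr J1 J2 P Q) : Matrix (Fin (1 + P + Q)) (Fin (1 + P + Q)) ℝ :=
  Matrix.of fun p q =>
    (∑ j, S.α1 j * (deriv S.h ⟪S.βstar, S.x1v j⟫) ^ 2 * (S.x1v j p * S.x1v j q)) +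
      (∑ j, S.α2 j * (deriv S.h ⟪S.βstar, S.x2v j⟫) ^ 2 * (S.x2v j p * S.x2v j q))

/-- The limiting score covariance matrix V(β*). -/
def Vmat (S : LagoSetup Ω Pr J1 J2 P Q) : Matrix (Fin (1 + P + Q)) (Fin (1 + P + Q)) ℝ :=
  Matrix.of fun p q =>
    (∑ j, S.α1 j * S.var1 j * (deriv S.h ⟪S.βstar, S.x1v j⟫) ^ 2 * (S.x1v j p * S.x1v j q)) +
      (∑ j, S.α2 j * S.var2 j * (deriv S.h ⟪S.βstar, S.x2v j⟫) ^ 2 * (S.x2v j p * S.x2v j q))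

end LagoSetup

/-- `μ` is the centered Gaussian law on ℝ^d with covariance matrix `C`
(characterized via all one-dimensional projections, Cramér–Wold). -/
def IsCenteredGaussianLaw {d : ℕ} (μ : Measure (EuclideanSpace ℝ (Fin d)))
    (C : Matrix (Fin d) (Fin d) ℝ) : Prop :=
  IsProbabilityMeasure μ ∧
    ∀ l : EuclideanSpace ℝ (Fin d),
      Measure.map (fun v => ⟪l, v⟫) μ =
        gaussianReal 0 (Real.toNNReal (∑ p, ∑ q, l p * C p q * l q))

/-- Convergence in distribution: weak convergence of the laws. -/
def TendstoInDistribution {Ω : Type} [MeasurableSpace Ω] {E : Type*}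
    [MeasurableSpace E] [TopologicalSpace E]
    (X : ℕ → Ω → E) (Pr : Measure Ω) (μ : Measure E) : Prop :=
  ∀ f : BoundedContinuousFunction E ℝ,
    Tendsto (fun n => ∫ ω, f (X n ω) ∂Pr) atTop (𝓝 (∫ x, f x ∂μ))

section TIMAPI

variable {Ω : Type} [MeasurableSpace Ω] {Pr : Measure Ω}

lemma tim_congr' {E : Type*} [EDist E] {f g : ℕ → Ω → E} {c : Ω → E}
    (h : ∀ n ω, f n ω = g n ω) (hf : TendstoInMeasure Pr f atTop c) :
    TendstoInMeasure Pr g atTop c := by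
  have : f = g := funext fun n => funext (h n)
  rwa [this] at hf

lemma tim_const_seq {r : ℕ → ℝ} {c : ℝ} (hr : Tendsto r atTop (𝓝 c)) :
    TendstoInMeasure Pr (fun n (_ : Ω) => r n) atTop (fun _ => c) := by
  rw [tendstoInMeasure_iff_dist]
  intro ε hε
  have hev : ∀ᶠ n in atTop, Pr {x : Ω | ε ≤ dist (r n) c} = 0 := by
    filter_upwards [hr (Metric.ball_mem_nhds c hε)] with n hn
    have : {x : Ω | ε ≤ dist (r n) c} = ∅ := by
      ext x
      simp only [Set.mem_setOf_eq, Set.mem_empty_iff_false, iff_false, not_le]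
      exact hn
    simp [this]
  exact Tendsto.congr' (hev.mono fun n hn => hn.symm) tendsto_const_nhds

lemma tim_pair {E F : Type*} [PseudoMetricSpace E] [PseudoMetricSpace F]
    {f : ℕ → Ω → E} {g : ℕ → Ω → F} {a : E} {b : F}
    (hf : TendstoInMeasure Pr f atTop (fun _ => a))
    (hg : TendstoInMeasure Pr g atTop (fun _ => b)) :
    TendstoInMeasure Pr (fun n ω => (f n ω, g n ω)) atTop (fun _ => (a, b)) := by
  rw [tendstoInMeasure_iff_dist]
  intro ε hε
  have hsub : ∀ n, Pr {x | ε ≤ dist ((f n x, g n x)) (a, b)} ≤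
      Pr {x | ε ≤ dist (f n x) a} + Pr {x | ε ≤ dist (g n x) b} := by
    intro n
    refine le_trans (measure_mono ?_) (measure_union_le _ _)
    intro x hx
    simp only [Set.mem_setOf_eq, Prod.dist_eq] at hx
    rcases max_cases (dist (f n x) a) (dist (g n x) b) with ⟨h1, _⟩ | ⟨h1, _⟩
    · exact Or.inl (by simpa [Set.mem_setOf_eq] using h1 ▸ hx)
    · exact Or.inr (by simpa [Set.mem_setOf_eq] using h1 ▸ hx)
  have hadd := Tendsto.add (tendstoInMeasure_iff_dist.mp hf ε hε) (tendstoInMeasure_iff_dist.mp hg ε hε)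
  rw [add_zero] at hadd
  exact tendsto_of_tendsto_of_tendsto_of_le_of_le tendsto_const_nhds hadd
    (fun n => zero_le) hsub

lemma tim_comp {E F : Type*} [PseudoMetricSpace E] [PseudoMetricSpace F]
    {f : ℕ → Ω → E} {a : E} (hf : TendstoInMeasure Pr f atTop (fun _ => a))
    {F0 : E → F} (hF : ContinuousAt F0 a) :
    TendstoInMeasure Pr (fun n ω => F0 (f n ω)) atTop (fun _ => F0 a) := by
  rw [tendstoInMeasure_iff_dist]
  intro ε hε
  obtain ⟨δ, hδ, hδ'⟩ := Metric.continuousAt_iff.mp hF ε hε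
  refine tendsto_of_tendsto_of_tendsto_of_le_of_le tendsto_const_nhds (tendstoInMeasure_iff_dist.mp hf δ hδ)
    (fun n => zero_le) (fun n => measure_mono ?_)
  intro x hx
  simp only [Set.mem_setOf_eq] at hx ⊢
  by_contra hcon
  push_neg at hcon
  exact absurd hx (not_le.mpr (hδ' hcon))

lemma tim_add {f g : ℕ → Ω → ℝ} {a b : ℝ}
    (hf : TendstoInMeasure Pr f atTop (fun _ => a))
    (hg : TendstoInMeasure Pr g atTop (fun _ => b)) :
    TendstoInMeasure Pr (fun n ω => f n ω + g n ω) atTop (fun _ => a + b) := by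
  have h1 := tim_pair hf hg
  have hc : ContinuousAt (fun y : ℝ × ℝ => y.1 + y.2) (a, b) :=
    (continuous_fst.add continuous_snd).continuousAt
  exact tim_comp h1 hc

lemma tim_mul {f g : ℕ → Ω → ℝ} {a b : ℝ}
    (hf : TendstoInMeasure Pr f atTop (fun _ => a))
    (hg : TendstoInMeasure Pr g atTop (fun _ => b)) :
    TendstoInMeasure Pr (fun n ω => f n ω * g n ω) atTop (fun _ => a * b) := by
  have h1 := tim_pair hf hg
  have hc : ContinuousAt (fun y : ℝ × ℝ => y.1 * y.2) (a, b) :=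
    (continuous_fst.mul continuous_snd).continuousAt
  exact tim_comp h1 hc

lemma tim_sub {f g : ℕ → Ω → ℝ} {a b : ℝ}
    (hf : TendstoInMeasure Pr f atTop (fun _ => a))
    (hg : TendstoInMeasure Pr g atTop (fun _ => b)) :
    TendstoInMeasure Pr (fun n ω => f n ω - g n ω) atTop (fun _ => a - b) := by
  have h1 := tim_pair hf hg
  have hc : ContinuousAt (fun y : ℝ × ℝ => y.1 - y.2) (a, b) :=
    (continuous_fst.sub continuous_snd).continuousAt
  exact tim_comp h1 hc

lemma tim_sum {ι : Type*} (s : Finset ι) {f : ι → ℕ → Ω → ℝ} {c : ι → ℝ}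
    (hf : ∀ j ∈ s, TendstoInMeasure Pr (f j) atTop (fun _ => c j)) :
    TendstoInMeasure Pr (fun n ω => ∑ j ∈ s, f j n ω) atTop (fun _ => ∑ j ∈ s, c j) := by
  classical
  induction s using Finset.induction with
  | empty => simpa using (tim_const_seq (tendsto_const_nhds (x := (0 : ℝ))) : _)
  | @insert a s ha ih =>
    have h1 := hf a (Finset.mem_insert_self a s)
    have h2 := ih fun j hj => hf j (Finset.mem_insert_of_mem hj)
    simp only [Finset.sum_insert ha]
    exact tim_add h1 h2

end TIMAPI

section DV
variable {P Q : ℕ} (a : EuclideanSpace ℝ (Fin P)) (z : EuclideanSpace ℝ (Fin Q))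

lemma designVec_apply (i : Fin (1 + P + Q)) :
    designVec a z i = Fin.append (Fin.append ![(1 : ℝ)] a) z i := rfl

lemma continuous_designVec :
    Continuous fun a : EuclideanSpace ℝ (Fin P) => designVec a z := by
  have h1 : Continuous fun (a : EuclideanSpace ℝ (Fin P)) (i : Fin (1 + P + Q)) =>
      Fin.append (Fin.append ![(1 : ℝ)] a) z i := by
    refine continuous_pi fun i => ?_
    induction i using Fin.addCases with
    | left i =>
      induction i using Fin.addCases with
      | left i => simpa [Fin.append_left] using continuous_const
      | right i =>
        simp only [Fin.append_left, Fin.append_right]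
        exact PiLp.continuous_apply (p := 2) _ i
    | right i => simpa [Fin.append_right] using continuous_const
  exact (EuclideanSpace.equiv (Fin (1 + P + Q)) ℝ).symm.continuous.comp h1

end DV

section AUX3
variable {Ω : Type} [MeasurableSpace Ω] {Pr : Measure Ω}

lemma tim_avg_zero [IsProbabilityMeasure Pr] {X : ℕ → Ω → ℝ}
    (hmeas : ∀ i, Measurable (X i)) {C : ℝ} (hbdd : ∀ i ω, |X i ω| ≤ C)
    (hindep : Pairwise fun i j => IndepFun (X i) (X j) Pr)
    (hident : ∀ i, IdentDistrib (X i) (X 0) Pr Pr)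
    (hmean : ∫ ω, X 0 ω ∂Pr = 0)
    {m : ℕ → ℕ} {α : ℝ} (hα : 0 < α)
    (hm : Tendsto (fun n => (m n : ℝ) / n) atTop (𝓝 α)) :
    TendstoInMeasure Pr (fun n ω => (∑ i ∈ Finset.range (m n), X i ω) / n) atTop
      (fun _ => (0 : ℝ)) := by
  have hint : Integrable (X 0) Pr :=
    ⟨(hmeas 0).aestronglyMeasurable,
      HasFiniteIntegral.of_bounded (C := C) (ae_of_all _ fun ω => by
        simpa [Real.norm_eq_abs] using hbdd 0 ω)⟩
  have hslln := ProbabilityTheory.strong_law_ae X hint hindep hident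
  -- m n → ∞
  have hmtop : Tendsto m atTop atTop := by
    rw [← tendsto_natCast_atTop_iff (R := ℝ)]
    have h2 : Tendsto (fun n : ℕ => (m n : ℝ) / n * n) atTop atTop :=
      Tendsto.pos_mul_atTop hα hm tendsto_natCast_atTop_atTop
    refine h2.congr' ?_
    filter_upwards [eventually_ne_atTop 0] with n hn
    field_simp
  have hμ0 : Pr[X 0] = 0 := hmean
  refine tendstoInMeasure_of_tendsto_ae (fun n => ?_) ?_
  · exact ((Finset.measurable_sum _ fun i _ => hmeas i).div_const _).aestronglyMeasurable
  · filter_upwards [hslln] with ω hω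
    rw [hμ0] at hω
    have h1 : Tendsto (fun n => ((m n : ℝ))⁻¹ • ∑ i ∈ Finset.range (m n), X i ω) atTop
        (𝓝 0) := hω.comp hmtop
    have h2 : Tendsto (fun n => (m n : ℝ) / n *
        (((m n : ℝ))⁻¹ • ∑ i ∈ Finset.range (m n), X i ω)) atTop (𝓝 (α * 0)) :=
      hm.mul h1
    rw [mul_zero] at h2
    refine h2.congr fun n => ?_
    rcases eq_or_ne (m n) 0 with h | h
    · simp [h]
    · have : (m n : ℝ) ≠ 0 := Nat.cast_ne_zero.mpr h
      rcases eq_or_ne (n : ℝ) 0 with h' | h'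
      · simp [h', smul_eq_mul]
      · field_simp [smul_eq_mul]
        rw [smul_eq_mul]; field_simp

lemma tim_of_law_eq {E' : Type*} [MeasurableSpace E'] {Φ Φ' : ℕ → Ω → E'}
    (hΦ : ∀ n, Measurable (Φ n)) (hΦ' : ∀ n, Measurable (Φ' n))
    (hlaw : ∀ n, Measure.map (Φ n) Pr = Measure.map (Φ' n) Pr)
    {g : ℕ → E' → ℝ} (hg : ∀ n, Measurable (g n))
    (h : TendstoInMeasure Pr (fun n ω => g n (Φ' n ω)) atTop (fun _ => (0 : ℝ))) :
    TendstoInMeasure Pr (fun n ω => g n (Φ n ω)) atTop (fun _ => (0 : ℝ)) := by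
  rw [tendstoInMeasure_iff_dist]
  intro ε hε
  have key : ∀ n, Pr {x | ε ≤ dist (g n (Φ n x)) 0} = Pr {x | ε ≤ dist (g n (Φ' n x)) 0} := by
    intro n
    have hset : MeasurableSet {y : E' | ε ≤ dist (g n y) 0} := by
      have hd : Measurable fun y : E' => dist (g n y) 0 := (hg n).dist measurable_const
      exact measurableSet_le measurable_const hd
    have e1 : {x | ε ≤ dist (g n (Φ n x)) 0} = Φ n ⁻¹' {y : E' | ε ≤ dist (g n y) 0} := rfl
    have e2 : {x | ε ≤ dist (g n (Φ' n x)) 0} = Φ' n ⁻¹' {y : E' | ε ≤ dist (g n y) 0} := rfl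
    rw [e1, e2, ← Measure.map_apply (hΦ n) hset, ← Measure.map_apply (hΦ' n) hset, hlaw n]
  exact (tendstoInMeasure_iff_dist.mp h ε hε).congr fun n => (key n).symm
end AUX3

lemma hasFDerivAt_term {E : Type*} [NormedAddCommGroup E] [InnerProductSpace ℝ E]
    {h : ℝ → ℝ} (hh : ContDiff ℝ 2 h) (x : E) (c e : ℝ) (β : E) :
    HasFDerivAt (fun b : E => (deriv h ⟪b, x⟫ * (c + e - h ⟪b, x⟫)) • x)
      (((deriv (deriv h) ⟪β, x⟫ * (c + e - h ⟪β, x⟫) -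
          deriv h ⟪β, x⟫ * deriv h ⟪β, x⟫) • (innerSL ℝ x : E →L[ℝ] ℝ)).smulRight x) β := by
  have hh' : ContDiff ℝ (1 + 1 : ℕ) h := by
    exact_mod_cast hh
  have hd1 : Differentiable ℝ h := hh.differentiable (by norm_num)
  have hd2 : Differentiable ℝ (deriv h) := by
    have := (contDiff_succ_iff_deriv.mp (by exact_mod_cast hh' :
      ContDiff ℝ ((1 : ℕ) + 1 : WithTop ℕ∞) h)).2.2
    exact this.differentiable (by norm_num)
  have hL : HasFDerivAt (fun b : E => ⟪b, x⟫) (innerSL ℝ x : E →L[ℝ] ℝ) β := by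
    have h0 := (innerSL ℝ x : E →L[ℝ] ℝ).hasFDerivAt (x := β)
    have : (fun b : E => ⟪b, x⟫) = fun b : E => (innerSL ℝ x : E →L[ℝ] ℝ) b := by
      funext b
      simp [real_inner_comm]
    rw [this]
    exact h0
  set t := ⟪β, x⟫ with ht
  have hφ : HasDerivAt (fun s => deriv h s * (c + e - h s))
      (deriv (deriv h) t * (c + e - h t) + deriv h t * (-(deriv h t))) t :=
    ((hd2 t).hasDerivAt).mul (((hd1 t).hasDerivAt).const_sub (c + e))
  have hcomp := hφ.comp_hasFDerivAt β hL
  have hfinal := hcomp.smul_const x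
  have heq : deriv (deriv h) t * (c + e - h t) + deriv h t * (-(deriv h t)) =
      deriv (deriv h) t * (c + e - h t) - deriv h t * deriv h t := by ring
  rwa [heq] at hfinal


lemma piLp_sum_apply {ι κ : Type*} (s : Finset κ) (f : κ → EuclideanSpace ℝ ι) (i : ι) :
    (∑ k ∈ s, f k) i = ∑ k ∈ s, f k i := by
  classical
  induction s using Finset.induction with
  | empty => rfl
  | @insert a s ha ih => rw [Finset.sum_insert ha, Finset.sum_insert ha, PiLp.add_apply, ih]

section ULEM

variable {Ω : Type} [MeasurableSpace Ω] {Pr : Measure Ω} {J1 J2 P Q : ℕ}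

lemma hasFDerivAt_U (S : LagoSetup Ω Pr J1 J2 P Q) (n : ℕ) (ω : Ω)
    (β : EuclideanSpace ℝ (Fin (1 + P + Q))) :
    HasFDerivAt (fun b => S.U n b ω)
      ((n : ℝ)⁻¹ • ((∑ j, ∑ i ∈ Finset.range (S.n1 n j),
        ((deriv (deriv S.h) ⟪β, S.x1v j⟫ *
            (S.h ⟪S.βstar, S.x1v j⟫ + S.ε1 j i ω - S.h ⟪β, S.x1v j⟫) -
          deriv S.h ⟪β, S.x1v j⟫ * deriv S.h ⟪β, S.x1v j⟫) •
            (innerSL ℝ (S.x1v j))).smulRight (S.x1v j)) +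
       (∑ j, ∑ i ∈ Finset.range (S.n2 n j),
        ((deriv (deriv S.h) ⟪β, S.X2v n j ω⟫ *
            (S.h ⟪S.βstar, S.X2v n j ω⟫ + S.ε2n n j i ω - S.h ⟪β, S.X2v n j ω⟫) -
          deriv S.h ⟪β, S.X2v n j ω⟫ * deriv S.h ⟪β, S.X2v n j ω⟫) •
            (innerSL ℝ (S.X2v n j ω))).smulRight (S.X2v n j ω)))) β := by
  have H : HasFDerivAt (fun b => (∑ j, ∑ i ∈ Finset.range (S.n1 n j),
        (deriv S.h ⟪b, S.x1v j⟫ *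
          (S.h ⟪S.βstar, S.x1v j⟫ + S.ε1 j i ω - S.h ⟪b, S.x1v j⟫)) • S.x1v j) +
      (∑ j, ∑ i ∈ Finset.range (S.n2 n j),
        (deriv S.h ⟪b, S.X2v n j ω⟫ *
          (S.h ⟪S.βstar, S.X2v n j ω⟫ + S.ε2n n j i ω - S.h ⟪b, S.X2v n j ω⟫)) •
          S.X2v n j ω)) _ β :=
    HasFDerivAt.add
      (HasFDerivAt.fun_sum fun j _ => HasFDerivAt.fun_sum fun i _ =>
        hasFDerivAt_term S.h_smooth (S.x1v j) (S.h ⟪S.βstar, S.x1v j⟫) (S.ε1 j i ω) β)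
      (HasFDerivAt.fun_sum fun j _ => HasFDerivAt.fun_sum fun i _ =>
        hasFDerivAt_term S.h_smooth (S.X2v n j ω) (S.h ⟪S.βstar, S.X2v n j ω⟫)
          (S.ε2n n j i ω) β)
  exact H.const_smul ((n : ℝ)⁻¹)

lemma fderiv_U_apply (S : LagoSetup Ω Pr J1 J2 P Q) (n : ℕ) (ω : Ω)
    (β : EuclideanSpace ℝ (Fin (1 + P + Q))) (p q : Fin (1 + P + Q)) :
    (fderiv ℝ (fun b => S.U n b ω) β) (EuclideanSpace.single q 1) p
      = (n : ℝ)⁻¹ * ((∑ j, (∑ i ∈ Finset.range (S.n1 n j),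
          (deriv (deriv S.h) ⟪β, S.x1v j⟫ *
            (S.h ⟪S.βstar, S.x1v j⟫ + S.ε1 j i ω - S.h ⟪β, S.x1v j⟫) -
           deriv S.h ⟪β, S.x1v j⟫ * deriv S.h ⟪β, S.x1v j⟫)) * (S.x1v j q * S.x1v j p)) +
        (∑ j, (∑ i ∈ Finset.range (S.n2 n j),
          (deriv (deriv S.h) ⟪β, S.X2v n j ω⟫ *
            (S.h ⟪S.βstar, S.X2v n j ω⟫ + S.ε2n n j i ω - S.h ⟪β, S.X2v n j ω⟫) -
           deriv S.h ⟪β, S.X2v n j ω⟫ * deriv S.h ⟪β, S.X2v n j ω⟫)) *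
             (S.X2v n j ω q * S.X2v n j ω p))) := by
  rw [(hasFDerivAt_U S n ω β).fderiv]
  simp only [ContinuousLinearMap.smul_apply, ContinuousLinearMap.add_apply,
    ContinuousLinearMap.sum_apply, ContinuousLinearMap.smulRight_apply,
    ContinuousLinearMap.coe_smul', Pi.smul_apply, innerSL_apply_apply,
    EuclideanSpace.inner_single_right, RCLike.star_def, conj_trivial, smul_eq_mul,
    PiLp.smul_apply, PiLp.add_apply, piLp_sum_apply]
  rw [mul_eq_mul_left_iff]
  left
  congr 1
  · refine Finset.sum_congr rfl fun j _ => ?_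
    rw [Finset.sum_mul]
    exact Finset.sum_congr rfl fun i _ => by ring
  · refine Finset.sum_congr rfl fun j _ => ?_
    rw [Finset.sum_mul]
    exact Finset.sum_congr rfl fun i _ => by ring

end ULEM



def g1f {E : Type*} [NormedAddCommGroup E] [InnerProductSpace ℝ E]
    (h : ℝ → ℝ) (βs b x : E) : ℝ :=
  deriv h ⟪b, x⟫ * deriv h ⟪b, x⟫ - deriv (deriv h) ⟪b, x⟫ * (h ⟪βs, x⟫ - h ⟪b, x⟫)

lemma continuous_g1f {E : Type*} [NormedAddCommGroup E] [InnerProductSpace ℝ E]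
    {h : ℝ → ℝ} (hc0 : Continuous h) (hc1 : Continuous (deriv h))
    (hc2 : Continuous (deriv (deriv h))) (βs : E) :
    Continuous fun y : E × E => g1f h βs y.1 y.2 := by
  have hi : Continuous fun y : E × E => ⟪y.1, y.2⟫ := continuous_fst.inner continuous_snd
  have hi2 : Continuous fun y : E × E => ⟪βs, y.2⟫ := continuous_const.inner continuous_snd
  exact ((hc1.comp hi).mul (hc1.comp hi)).sub
    ((hc2.comp hi).mul ((hc0.comp hi2).sub (hc0.comp hi)))

lemma inner_sum_eq (m : ℕ) (d2 d1 c ht : ℝ) (eps : ℕ → ℝ) :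
    (∑ i ∈ Finset.range m, (d2 * (c + eps i - ht) - d1 * d1))
      = (m : ℝ) * (d2 * (c - ht) - d1 * d1) + d2 * ∑ i ∈ Finset.range m, eps i := by
  calc ∑ i ∈ Finset.range m, (d2 * (c + eps i - ht) - d1 * d1)
      = ∑ i ∈ Finset.range m, ((d2 * (c - ht) - d1 * d1) + d2 * eps i) :=
        Finset.sum_congr rfl fun i _ => by ring
    _ = m • (d2 * (c - ht) - d1 * d1) + ∑ i ∈ Finset.range m, d2 * eps i := by
        rw [Finset.sum_add_distrib, Finset.sum_const, Finset.card_range]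
    _ = (m : ℝ) * (d2 * (c - ht) - d1 * d1) + d2 * ∑ i ∈ Finset.range m, eps i := by
        rw [nsmul_eq_mul, Finset.mul_sum]


section GenCont
variable {E : Type*} [NormedAddCommGroup E] [InnerProductSpace ℝ E] {h : ℝ → ℝ}

variable (hc0 : Continuous h) (hc1 : Continuous (deriv h))
  (hc2 : Continuous (deriv (deriv h)))

include hc0 hc1 hc2

lemma cont_g1f_left (βs x : E) : Continuous fun b : E => g1f h βs b x :=
  (continuous_g1f hc0 hc1 hc2 βs).comp (continuous_id.prodMk continuous_const)

lemma cont_dd_left (x : E) : Continuous fun b : E => deriv (deriv h) ⟪b, x⟫ :=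
  hc2.comp (continuous_id.inner continuous_const)

lemma cont_g1f_pair {F : Type*} [TopologicalSpace F] (βs : E) (φ : F → E)
    (hφ : Continuous φ) : Continuous fun y : E × F => g1f h βs y.1 (φ y.2) :=
  (continuous_g1f hc0 hc1 hc2 βs).comp (continuous_fst.prodMk (hφ.comp continuous_snd))

lemma cont_dd_pair {F : Type*} [TopologicalSpace F] (φ : F → E)
    (hφ : Continuous φ) : Continuous fun y : E × F => deriv (deriv h) ⟪y.1, φ y.2⟫ :=
  hc2.comp (continuous_fst.inner ((hφ.comp continuous_snd)))

end GenCont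

lemma cont_snd_mul {E F : Type*} [TopologicalSpace E] [TopologicalSpace F]
    (ψ χ : F → ℝ) (hψ : Continuous ψ) (hχ : Continuous χ) :
    Continuous fun y : E × F => ψ y.2 * χ y.2 :=
  ((hψ.comp continuous_snd)).mul ((hχ.comp continuous_snd))

lemma continuous_designVec_coord {P Q : ℕ} (z : EuclideanSpace ℝ (Fin Q))
    (i : Fin (1 + P + Q)) :
    Continuous fun a : EuclideanSpace ℝ (Fin P) => designVec a z i := by
  induction i using Fin.addCases with
  | left i =>
    induction i using Fin.addCases with
    | left i =>
      simp only [designVec_apply, Fin.append_left]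
      exact continuous_const
    | right i =>
      simp only [designVec_apply, Fin.append_left, Fin.append_right]
      exact PiLp.continuous_apply (p := 2) _ i
  | right i =>
    simp only [designVec_apply, Fin.append_right]
    exact continuous_const


set_option maxHeartbeats 2000000 in
/-- **Convergence of the Jacobian of the estimating function:** for any B-valued random
vectors β̃_n → β* in probability, −D U_n(β̃_n) → J(β*) in probability, entrywise. -/
theorem lago_jacobian_convergence
    {Ω : Type} [MeasurableSpace Ω] {Pr : Measure Ω} [IsProbabilityMeasure Pr]
    {J1 J2 P Q : ℕ} (S : LagoSetup Ω Pr J1 J2 P Q)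
    (βt : ℕ → Ω → EuclideanSpace ℝ (Fin (1 + P + Q)))
    (hβtmeas : ∀ n, Measurable (βt n))
    (hβtmem : ∀ n ω, βt n ω ∈ S.B)
    (hβtcons : TendstoInMeasure Pr (fun n ω => βt n ω) atTop (fun _ => S.βstar)) :
    ∀ p q : Fin (1 + P + Q),
      TendstoInMeasure Pr
        (fun (n : ℕ) ω =>
          -((fderiv ℝ (fun b => S.U n b ω) (βt n ω)) (EuclideanSpace.single q 1) p))
        atTop (fun _ => S.Jmat p q) := by
  intro p q
  classical
  -- continuity of h and its derivatives
  have hc0 : Continuous S.h := S.h_smooth.continuous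
  have hc1 : Continuous (deriv S.h) := S.h_smooth.continuous_deriv one_le_two
  have hd'1 : ContDiff ℝ 1 (deriv S.h) := by
    have hh' : ContDiff ℝ (1 + 1 : ℕ) S.h := by exact_mod_cast S.h_smooth
    exact (contDiff_succ_iff_deriv.mp (by exact_mod_cast hh' :
      ContDiff ℝ ((1 : ℕ) + 1 : WithTop ℕ∞) S.h)).2.2
  have hc2 : Continuous (deriv (deriv S.h)) := hd'1.continuous_deriv le_rfl
  -- the explicit form of the negated Jacobian entry
  have key : ∀ (n : ℕ) (ω : Ω),
      -((fderiv ℝ (fun b => S.U n b ω) (βt n ω)) (EuclideanSpace.single q 1) p)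
      = (∑ j, (((S.n1 n j : ℝ) / n) * g1f S.h S.βstar (βt n ω) (S.x1v j)
            - deriv (deriv S.h) ⟪βt n ω, S.x1v j⟫ *
              ((∑ i ∈ Finset.range (S.n1 n j), S.ε1 j i ω) / n))
          * (S.x1v j q * S.x1v j p))
        + (∑ j, (((S.n2 n j : ℝ) / n) * g1f S.h S.βstar (βt n ω) (S.X2v n j ω)
            - deriv (deriv S.h) ⟪βt n ω, S.X2v n j ω⟫ *
              ((∑ i ∈ Finset.range (S.n2 n j), S.ε2n n j i ω) / n))
          * (S.X2v n j ω q * S.X2v n j ω p)) := by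
    intro n ω
    rw [fderiv_U_apply S n ω (βt n ω) p q]
    simp only [inner_sum_eq]
    rw [mul_add, neg_add, Finset.mul_sum, Finset.mul_sum, ← Finset.sum_neg_distrib,
      ← Finset.sum_neg_distrib]
    congr 1
    · exact Finset.sum_congr rfl fun j _ => by simp only [g1f]; ring
    · exact Finset.sum_congr rfl fun j _ => by simp only [g1f]; ring
  -- stage-1 error averages tend to zero in probability
  have hE1 : ∀ j : Fin J1, TendstoInMeasure Pr
      (fun n ω => (∑ i ∈ Finset.range (S.n1 n j), S.ε1 j i ω) / n) atTop
      (fun _ => (0 : ℝ)) := by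
    intro j
    refine tim_avg_zero (X := fun i ω => S.ε1 j i ω) (fun i => S.meas_ε1 j i)
      (C := S.bound) (fun i ω => S.ε1_bdd j i ω) ?_ (fun i => S.ε1_ident j i)
      (S.ε1_mean j 0) (S.α1_pos j) (S.α1_lim j)
    intro i i' hii'
    have hne : (Sum.inl (j, i) : (Fin J1 × ℕ) ⊕ (Fin J2 × ℕ)) ≠ Sum.inl (j, i') := by
      simp [hii']
    have := S.ε_indep.indepFun hne
    simpa using this
  -- stage-2 coupled error averages tend to zero in probability
  have hE2t : ∀ j : Fin J2, TendstoInMeasure Pr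
      (fun n ω => (∑ i ∈ Finset.range (S.n2 n j), S.ε2 j i ω) / n) atTop
      (fun _ => (0 : ℝ)) := by
    intro j
    refine tim_avg_zero (X := fun i ω => S.ε2 j i ω) (fun i => S.meas_ε2 j i)
      (C := S.bound) (fun i ω => S.ε2_bdd j i ω) ?_ (fun i => S.ε2_ident j i)
      (S.ε2_mean j 0) (S.α2_pos j) (S.α2_lim j)
    intro i i' hii'
    have hne : (Sum.inr (j, i) : (Fin J1 × ℕ) ⊕ (Fin J2 × ℕ)) ≠ Sum.inr (j, i') := by
      simp [hii']
    have := S.ε_indep.indepFun hne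
    simpa using this
  -- transfer to the realized stage-2 errors via the joint law
  have hE2 : ∀ j : Fin J2, TendstoInMeasure Pr
      (fun n ω => (∑ i ∈ Finset.range (S.n2 n j), S.ε2n n j i ω) / n) atTop
      (fun _ => (0 : ℝ)) := by
    intro j
    have hΦ : ∀ n, Measurable (fun ω =>
        ((fun p : Fin J1 × ℕ => S.ε1 p.1 p.2 ω), (fun j' => S.A2 n j' ω),
          (fun p : Fin J2 × ℕ => S.ε2n n p.1 p.2 ω))) := fun n =>
      (measurable_pi_lambda _ fun pr : Fin J1 × ℕ => S.meas_ε1 pr.1 pr.2).prodMk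
        ((measurable_pi_lambda _ fun j' => S.measA2 n j').prodMk
          (measurable_pi_lambda _ fun pr : Fin J2 × ℕ => S.meas_ε2n n pr.1 pr.2))
    have hΦ' : ∀ n, Measurable (fun ω =>
        ((fun p : Fin J1 × ℕ => S.ε1 p.1 p.2 ω), (fun j' => S.A2 n j' ω),
          (fun p : Fin J2 × ℕ => S.ε2 p.1 p.2 ω))) := fun n =>
      (measurable_pi_lambda _ fun pr : Fin J1 × ℕ => S.meas_ε1 pr.1 pr.2).prodMk
        ((measurable_pi_lambda _ fun j' => S.measA2 n j').prodMk
          (measurable_pi_lambda _ fun pr : Fin J2 × ℕ => S.meas_ε2 pr.1 pr.2))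
    have hg : ∀ n, Measurable (fun y : (Fin J1 × ℕ → ℝ) ×
        (Fin J2 → EuclideanSpace ℝ (Fin P)) × (Fin J2 × ℕ → ℝ) =>
        (∑ i ∈ Finset.range (S.n2 n j), y.2.2 (j, i)) / (n : ℝ)) := fun n =>
      (Finset.measurable_sum _ fun i _ =>
        (measurable_pi_apply (j, i)).comp (measurable_snd.comp measurable_snd)).div_const _
    have := tim_of_law_eq (Pr := Pr) hΦ hΦ' S.jointLaw hg
      (tim_congr' (fun n ω => rfl) (hE2t j))
    exact tim_congr' (fun n ω => rfl) this
  -- stage-1 summands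
  have hstage1 : ∀ j : Fin J1, TendstoInMeasure Pr
      (fun n ω => (((S.n1 n j : ℝ) / n) * g1f S.h S.βstar (βt n ω) (S.x1v j)
          - deriv (deriv S.h) ⟪βt n ω, S.x1v j⟫ *
            ((∑ i ∈ Finset.range (S.n1 n j), S.ε1 j i ω) / n))
        * (S.x1v j q * S.x1v j p)) atTop
      (fun _ => (S.α1 j * g1f S.h S.βstar S.βstar (S.x1v j)
          - deriv (deriv S.h) ⟪S.βstar, S.x1v j⟫ * 0) * (S.x1v j q * S.x1v j p)) := by
    intro j
    have hFa := cont_g1f_left hc0 hc1 hc2 S.βstar (S.x1v j)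
    have hFb := cont_dd_left hc0 hc1 hc2 (S.x1v j)
    have hA := tim_comp hβtcons hFa.continuousAt
    have hB := tim_comp hβtcons hFb.continuousAt
    have hr := tim_const_seq (Pr := Pr) (S.α1_lim j)
    have hx : TendstoInMeasure Pr (fun n (_ : Ω) => S.x1v j q * S.x1v j p) atTop
        (fun _ => S.x1v j q * S.x1v j p) := tim_const_seq tendsto_const_nhds
    exact tim_mul (tim_sub (tim_mul hr hA) (tim_mul hB (hE1 j))) hx
  -- stage-2 summands
  have hstage2 : ∀ j : Fin J2, TendstoInMeasure Pr
      (fun n ω => (((S.n2 n j : ℝ) / n) * g1f S.h S.βstar (βt n ω) (S.X2v n j ω)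
          - deriv (deriv S.h) ⟪βt n ω, S.X2v n j ω⟫ *
            ((∑ i ∈ Finset.range (S.n2 n j), S.ε2n n j i ω) / n))
        * (S.X2v n j ω q * S.X2v n j ω p)) atTop
      (fun _ => (S.α2 j * g1f S.h S.βstar S.βstar (S.x2v j)
          - deriv (deriv S.h) ⟪S.βstar, S.x2v j⟫ * 0) * (S.x2v j q * S.x2v j p)) := by
    intro j
    have hW := tim_pair hβtcons (S.A2_tendsto j)
    have hφ := continuous_designVec (P := P) (S.z2 j)
    have hFa := cont_g1f_pair hc0 hc1 hc2 S.βstar _ hφ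
    have hFb := cont_dd_pair hc0 hc1 hc2 _ hφ
    have hFc := cont_snd_mul (E := EuclideanSpace ℝ (Fin (1 + P + Q)))
      _ _ (continuous_designVec_coord (P := P) (S.z2 j) q) (continuous_designVec_coord (P := P) (S.z2 j) p)
    have hA := tim_comp hW hFa.continuousAt
    have hB := tim_comp hW hFb.continuousAt
    have hC := tim_comp hW hFc.continuousAt
    have hr := tim_const_seq (Pr := Pr) (S.α2_lim j)
    exact tim_mul (tim_sub (tim_mul hr hA) (tim_mul hB (hE2 j))) hC
  -- assemble
  have hsum1 := tim_sum (Pr := Pr) Finset.univ (fun j _ => hstage1 j)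
  have hsum2 := tim_sum (Pr := Pr) Finset.univ (fun j _ => hstage2 j)
  have htot := tim_add hsum1 hsum2
  have hconst : ((∑ j, (S.α1 j * g1f S.h S.βstar S.βstar (S.x1v j)
          - deriv (deriv S.h) ⟪S.βstar, S.x1v j⟫ * 0) * (S.x1v j q * S.x1v j p))
      + (∑ j, (S.α2 j * g1f S.h S.βstar S.βstar (S.x2v j)
          - deriv (deriv S.h) ⟪S.βstar, S.x2v j⟫ * 0) * (S.x2v j q * S.x2v j p)))
      = S.Jmat p q := by
    simp only [g1f, LagoSetup.Jmat, Matrix.of_apply]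
    congr 1
    · exact Finset.sum_congr rfl fun j _ => by ring
    · exact Finset.sum_congr rfl fun j _ => by ring
  rw [hconst] at htot
  exact tim_congr' (fun n ω => (key n ω).symm) htot

end
end

section
/- Consistency of the sandwich variance estimator. In the two-stage LAGO setup, let (β̂_n) be B-valued random vectors with β̂_n → β* in probability. Define Ĵ_n := Σ_{j≤J₁} (n_j^{(1)}(n)/n) h′(⟨β̂_n, x_j^{(1)}⟩)² x_j^{(1)} (x_j^{(1)})ᵀ + Σ_{j≤J₂} (n_j^{(2)}(n)/n) h′(⟨β̂_n, X_j^{(2,n)}⟩)² X_j^{(2,n)} (X_j^{(2,n)})ᵀ and V̂_n := (1/n) Σ_{j≤J₁} h′(⟨β̂_n, x_j^{(1)}⟩)² x_j^{(1)} (x_j^{(1)})ᵀ Σ_{i≤n_j^{(1)}(n)} (Y_{ij}^{(1)} − h(⟨β̂_n, x_j^{(1)}⟩))² + (1/n) Σ_{j≤J₂} h′(⟨β̂_n, X_j^{(2,n)}⟩)² X_j^{(2,n)} (X_j^{(2,n)})ᵀ Σ_{i≤n_j^{(2)}(n)} (Y_{ij}^{(2,n)} − h(⟨β̂_n, X_j^{(2,n)}⟩))².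 Then Ĵ_n → J(β*) and V̂_n → V(β*) entrywise in probability as n → ∞, where J(β*) := Σ_{k=1,2} Σ_j α_{jk} h′(⟨β*, x_j^{(k)}⟩)² x_j^{(k)} (x_j^{(k)})ᵀ and V(β*) := Σ_{k=1,2} Σ_j α_{jk} σ_k²(j) h′(⟨β*, x_j^{(k)}⟩)² x_j^{(k)} (x_j^{(k)})ᵀ. -/
open MeasureTheory ProbabilityTheory Filter
open scoped RealInnerProductSpace BigOperators NNReal Topology ENNReal

noncomputable section

namespace LagoAux

variable {Ω : Type} [MeasurableSpace Ω] {Pr : Measure Ω}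

lemma tim_const_seq {c : ℕ → ℝ} {a : ℝ} (h : Tendsto c atTop (𝓝 a)) :
    TendstoInMeasure Pr (fun n (_ : Ω) => c n) atTop (fun _ => a) := by
  rw [tendstoInMeasure_iff_dist]
  intro ε hε
  have hev : ∀ᶠ n in atTop, Pr {ω : Ω | ε ≤ dist (c n) a} = 0 := by
    filter_upwards [Metric.tendsto_nhds.mp h ε hε] with n hn
    have : {ω : Ω | ε ≤ dist (c n) a} = ∅ := by
      ext ω; simp only [Set.mem_setOf_eq, Set.mem_empty_iff_false, iff_false, not_le]; exact hn
    simp [this]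
  exact Tendsto.congr' (by filter_upwards [hev] with n hn using hn.symm) tendsto_const_nhds

lemma tim_sub_iff {f : ℕ → Ω → ℝ} {a : ℝ} :
    TendstoInMeasure Pr f atTop (fun _ => a) ↔
      TendstoInMeasure Pr (fun n ω => f n ω - a) atTop (fun _ => (0 : ℝ)) := by
  simp [tendstoInMeasure_iff_dist, Real.dist_eq]

lemma tim0_of_le {f g : ℕ → Ω → ℝ} {C : ℝ} (hC : 0 < C)
    (hg : TendstoInMeasure Pr g atTop (fun _ => (0 : ℝ)))
    (hle : ∀ n ω, |f n ω| ≤ C * |g n ω|) :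
    TendstoInMeasure Pr f atTop (fun _ => (0 : ℝ)) := by
  rw [tendstoInMeasure_iff_dist] at hg ⊢
  intro ε hε
  refine tendsto_of_tendsto_of_tendsto_of_le_of_le tendsto_const_nhds
    (hg (ε / C) (by positivity)) (fun n => zero_le) (fun n => measure_mono ?_)
  intro ω hω
  simp only [Set.mem_setOf_eq, Real.dist_eq, sub_zero] at *
  rw [div_le_iff₀ hC]
  calc ε ≤ |f n ω| := hω
    _ ≤ C * |g n ω| := hle n ω
    _ = |g n ω| * C := mul_comm _ _

lemma tim0_add {f g : ℕ → Ω → ℝ}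
    (hf : TendstoInMeasure Pr f atTop (fun _ => (0 : ℝ)))
    (hg : TendstoInMeasure Pr g atTop (fun _ => (0 : ℝ))) :
    TendstoInMeasure Pr (fun n ω => f n ω + g n ω) atTop (fun _ => (0 : ℝ)) := by
  rw [tendstoInMeasure_iff_dist] at hf hg ⊢
  intro ε hε
  have h2 : (0:ℝ) < ε / 2 := by positivity
  have key := (hf (ε/2) h2).add (hg (ε/2) h2)
  rw [add_zero] at key
  refine tendsto_of_tendsto_of_tendsto_of_le_of_le tendsto_const_nhds key
    (fun n => zero_le) (fun n => ?_)
  refine le_trans (measure_mono ?_) (measure_union_le _ _)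
  intro ω hω
  simp only [Set.mem_setOf_eq, Real.dist_eq, sub_zero, Set.mem_union] at *
  by_contra hcon
  push_neg at hcon
  have := abs_add_le (f n ω) (g n ω)
  linarith [hcon.1, hcon.2, hω.trans this]

lemma tim_add {f g : ℕ → Ω → ℝ} {a b : ℝ}
    (hf : TendstoInMeasure Pr f atTop (fun _ => a))
    (hg : TendstoInMeasure Pr g atTop (fun _ => b)) :
    TendstoInMeasure Pr (fun n ω => f n ω + g n ω) atTop (fun _ => a + b) := by
  rw [tim_sub_iff] at hf hg ⊢
  have : (fun n ω => f n ω + g n ω - (a + b)) =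
      fun n ω => (f n ω - a) + (g n ω - b) := by funext n ω; ring
  rw [this]
  exact tim0_add hf hg

lemma tim_mul {f g : ℕ → Ω → ℝ} {a b M : ℝ} (hM : 0 < M)
    (hfM : ∀ n ω, |f n ω| ≤ M)
    (hf : TendstoInMeasure Pr f atTop (fun _ => a))
    (hg : TendstoInMeasure Pr g atTop (fun _ => b)) :
    TendstoInMeasure Pr (fun n ω => f n ω * g n ω) atTop (fun _ => a * b) := by
  rw [tim_sub_iff] at hf hg ⊢
  have : (fun n ω => f n ω * g n ω - a * b) =
      fun n ω => f n ω * (g n ω - b) + (f n ω - a) * b := by funext n ω; ring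
  rw [this]
  refine tim0_add (tim0_of_le hM hg ?_) (tim0_of_le (C := |b| + 1) (by positivity) hf ?_)
  · intro n ω; rw [abs_mul]; exact mul_le_mul_of_nonneg_right (hfM n ω) (abs_nonneg _)
  · intro n ω; rw [abs_mul, mul_comm]
    exact mul_le_mul_of_nonneg_right (by linarith [abs_nonneg b]) (abs_nonneg _)

lemma tim_comp {E F : Type*} [PseudoMetricSpace E] [PseudoMetricSpace F]
    {X : ℕ → Ω → E} {x0 : E} {φ : E → F}
    (hX : TendstoInMeasure Pr X atTop (fun _ => x0)) (hφ : ContinuousAt φ x0) :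
    TendstoInMeasure Pr (fun n ω => φ (X n ω)) atTop (fun _ => φ x0) := by
  rw [tendstoInMeasure_iff_dist] at hX ⊢
  intro ε hε
  obtain ⟨δ, hδ, hball⟩ := Metric.continuousAt_iff.mp hφ ε hε
  refine tendsto_of_tendsto_of_tendsto_of_le_of_le tendsto_const_nhds (hX δ hδ)
    (fun n => zero_le) (fun n => measure_mono ?_)
  intro ω hω
  simp only [Set.mem_setOf_eq] at *
  by_contra hcon
  push_neg at hcon
  exact absurd (hball hcon) (not_lt.mpr hω)

lemma tim_prodMk {E F : Type*} [PseudoMetricSpace E] [PseudoMetricSpace F]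
    {X : ℕ → Ω → E} {Y : ℕ → Ω → F} {x0 : E} {y0 : F}
    (hX : TendstoInMeasure Pr X atTop (fun _ => x0))
    (hY : TendstoInMeasure Pr Y atTop (fun _ => y0)) :
    TendstoInMeasure Pr (fun n ω => (X n ω, Y n ω)) atTop (fun _ => (x0, y0)) := by
  rw [tendstoInMeasure_iff_dist] at hX hY ⊢
  intro ε hε
  have key := (hX ε hε).add (hY ε hε)
  rw [add_zero] at key
  refine tendsto_of_tendsto_of_tendsto_of_le_of_le tendsto_const_nhds key
    (fun n => zero_le) (fun n => ?_)
  refine le_trans (measure_mono ?_) (measure_union_le _ _)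
  intro ω hω
  simp only [Set.mem_setOf_eq, Prod.dist_eq, Set.mem_union] at *
  rcases le_total (dist (X n ω) x0) (dist (Y n ω) y0) with h | h
  · right; exact hω.trans (max_le (h.trans le_rfl) le_rfl) |>.trans le_rfl
  · left; exact hω.trans (max_le le_rfl h)

lemma tim_sum {ι : Type*} (s : Finset ι) {f : ι → ℕ → Ω → ℝ} {a : ι → ℝ}
    (h : ∀ j ∈ s, TendstoInMeasure Pr (f j) atTop (fun _ => a j)) :
    TendstoInMeasure Pr (fun n ω => ∑ j ∈ s, f j n ω) atTop (fun _ => ∑ j ∈ s, a j) := by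
  classical
  induction s using Finset.induction with
  | empty => simpa using tim_const_seq (c := fun _ => (0:ℝ)) tendsto_const_nhds
  | insert x s hx ih =>
    simp only [Finset.sum_insert hx]
    exact tim_add (h x (Finset.mem_insert_self x s))
      (ih fun j hj => h j (Finset.mem_insert_of_mem hj))


variable {Ω : Type} [MeasurableSpace Ω] {Pr : Measure Ω}

lemma cheb [IsProbabilityMeasure Pr] {X : ℕ → Ω → ℝ} {b v : ℝ}
    (hmeas : ∀ i, Measurable (X i)) (hb : 0 ≤ b)
    (hbdd : ∀ i ω, |X i ω| ≤ b)
    (hindep : ∀ i i', i ≠ i' → IndepFun (X i) (X i') Pr)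
    (hvar : ∀ i, ∫ ω, X i ω ^ 2 ∂Pr = v)
    (m : ℕ) (hm : 1 ≤ m) {ε : ℝ} (hε : 0 < ε) :
    Pr {ω | ε ≤ |(m : ℝ)⁻¹ * ∑ i ∈ Finset.range m, X i ω ^ 2 - v|}
      ≤ ENNReal.ofReal (4 * b ^ 4 / (m * ε ^ 2)) := by
  have hsq : ∀ i ω, X i ω ^ 2 ≤ b ^ 2 := by
    intro i ω
    have := hbdd i ω; nlinarith [neg_abs_le (X i ω), le_abs_self (X i ω)]
  set Z : ℕ → Ω → ℝ := fun i ω => X i ω ^ 2 - v with hZ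
  have hvnn : 0 ≤ v := by
    rw [← hvar 0]; exact integral_nonneg fun ω => sq_nonneg _
  have hvle : v ≤ b ^ 2 := by
    rw [← hvar 0]
    calc ∫ ω, X 0 ω ^ 2 ∂Pr ≤ ∫ _ω, b ^ 2 ∂Pr :=
          integral_mono_of_nonneg (ae_of_all _ fun ω => sq_nonneg _)
            (integrable_const _) (ae_of_all _ fun ω => hsq 0 ω)
      _ = b ^ 2 := by simp
  have hZbdd : ∀ i ω, |Z i ω| ≤ 2 * b ^ 2 := by
    intro i ω
    have h2 : 0 ≤ X i ω ^ 2 := sq_nonneg _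
    rw [abs_le]; refine ⟨?_, ?_⟩ <;> simp only [hZ] <;> nlinarith [hsq i ω]
  have hZmeas : ∀ i, Measurable (Z i) := fun i => ((hmeas i).pow_const 2).sub measurable_const
  have hZint : ∀ i, Integrable (Z i) Pr :=
    fun i => (integrable_const (2 * b ^ 2)).mono' (hZmeas i).aestronglyMeasurable
      (ae_of_all _ fun ω => by rw [Real.norm_eq_abs]; exact hZbdd i ω)
  have hXsqint : ∀ i, Integrable (fun ω => X i ω ^ 2) Pr :=
    fun i => (integrable_const (b ^ 2)).mono' ((hmeas i).pow_const 2).aestronglyMeasurable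
      (ae_of_all _ fun ω => by
        rw [Real.norm_eq_abs, abs_of_nonneg (sq_nonneg _)]; exact hsq i ω)
  have hZmean : ∀ i, ∫ ω, Z i ω ∂Pr = 0 := by
    intro i
    simp only [hZ]
    rw [integral_sub (hXsqint i) (integrable_const v), hvar i, integral_const]
    simp
  -- product integrability
  have hZZint : ∀ i j, Integrable (fun ω => Z i ω * Z j ω) Pr := by
    intro i j
    refine (integrable_const ((2 * b ^ 2) * (2 * b ^ 2))).mono'
      ((hZmeas i).mul (hZmeas j)).aestronglyMeasurable (ae_of_all _ fun ω => ?_)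
    rw [Real.norm_eq_abs, abs_mul]
    exact mul_le_mul (hZbdd i ω) (hZbdd j ω) (abs_nonneg _) (by positivity)
  -- second moment of the sum
  set S : Ω → ℝ := fun ω => ∑ i ∈ Finset.range m, Z i ω with hS
  have hES : ∫ ω, S ω ^ 2 ∂Pr ≤ m * (4 * b ^ 4) := by
    have hexp : ∀ ω, S ω ^ 2 = ∑ i ∈ Finset.range m, ∑ j ∈ Finset.range m, Z i ω * Z j ω := by
      intro ω; rw [hS]; simp only [sq, Finset.sum_mul_sum]
    calc ∫ ω, S ω ^ 2 ∂Pr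
        = ∑ i ∈ Finset.range m, ∑ j ∈ Finset.range m, ∫ ω, Z i ω * Z j ω ∂Pr := by
          simp only [hexp]
          rw [integral_finset_sum _ fun i _ => integrable_finset_sum _ fun j _ => hZZint i j]
          exact Finset.sum_congr rfl fun i _ => integral_finset_sum _ fun j _ => hZZint i j
      _ ≤ ∑ i ∈ Finset.range m, (4 * b ^ 4) := by
          refine Finset.sum_le_sum fun i _ => ?_
          have hsplit : ∀ j ∈ Finset.range m, ∫ ω, Z i ω * Z j ω ∂Pr
              = if j = i then ∫ ω, Z i ω * Z i ω ∂Pr else 0 := by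
            intro j _
            by_cases hij : j = i
            · simp [hij]
            · simp only [hij, if_false]
              have hind : IndepFun (Z i) (Z j) Pr := by
                refine (hindep i j (Ne.symm hij)).comp
                  (measurable_id.pow_const 2 |>.sub measurable_const)
                  (measurable_id.pow_const 2 |>.sub measurable_const)
              calc ∫ ω, Z i ω * Z j ω ∂Pr
                  = (∫ ω, Z i ω ∂Pr) * ∫ ω, Z j ω ∂Pr :=
                    hind.integral_mul_eq_mul_integral (hZint i).aestronglyMeasurable (hZint j).aestronglyMeasurable
                _ = 0 := by rw [hZmean i, hZmean j]; ring
          rw [Finset.sum_congr rfl hsplit]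
          rw [Finset.sum_ite_eq' (Finset.range m) i fun _ => ∫ ω, Z i ω * Z i ω ∂Pr]
          have him : i ∈ Finset.range m ∨ ¬ i ∈ Finset.range m := em _
          rcases him with him | him
          · simp only [him, if_true]
            calc ∫ ω, Z i ω * Z i ω ∂Pr ≤ ∫ _ω, 4 * b ^ 4 ∂Pr := by
                  refine integral_mono (hZZint i i) (integrable_const _) fun ω => ?_
                  have := hZbdd i ω
                  nlinarith [abs_nonneg (Z i ω), neg_abs_le (Z i ω), le_abs_self (Z i ω)]
              _ = 4 * b ^ 4 := by simp
          · simp only [him, if_false]; positivity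
      _ = m * (4 * b ^ 4) := by simp [mul_comm]
  -- Markov
  have hmpos : (0:ℝ) < m := by exact_mod_cast hm
  have hevent : {ω | ε ≤ |(m : ℝ)⁻¹ * ∑ i ∈ Finset.range m, X i ω ^ 2 - v|}
      ⊆ {ω | ((m:ℝ) * ε) ^ 2 ≤ S ω ^ 2} := by
    intro ω hω
    simp only [Set.mem_setOf_eq] at hω ⊢
    have hrw : (m : ℝ)⁻¹ * ∑ i ∈ Finset.range m, X i ω ^ 2 - v = (m:ℝ)⁻¹ * S ω := by
      rw [hS]
      simp only [hZ, Finset.sum_sub_distrib, Finset.sum_const, Finset.card_range,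
        nsmul_eq_mul]
      field_simp
    rw [hrw, abs_mul, abs_of_nonneg (by positivity : (0:ℝ) ≤ (m:ℝ)⁻¹)] at hω
    have h1 : (m:ℝ) * ε ≤ |S ω| := by
      rw [inv_mul_eq_div, le_div_iff₀ hmpos] at hω
      linarith
    calc ((m:ℝ) * ε) ^ 2 ≤ |S ω| ^ 2 := by
          have : (0:ℝ) ≤ (m:ℝ) * ε := by positivity
          nlinarith
      _ = S ω ^ 2 := sq_abs _
  have hSsqint : Integrable (fun ω => S ω ^ 2) Pr := by
    have : (fun ω => S ω ^ 2) = fun ω => ∑ i ∈ Finset.range m, ∑ j ∈ Finset.range m,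
        Z i ω * Z j ω := by
      funext ω; rw [hS]; simp only [sq, Finset.sum_mul_sum]
    rw [this]
    exact integrable_finset_sum _ fun i _ => integrable_finset_sum _ fun j _ => hZZint i j
  have hmarkov := mul_meas_ge_le_integral_of_nonneg
    (ae_of_all Pr fun ω => sq_nonneg (S ω)) hSsqint (((m:ℝ) * ε) ^ 2)
  have hfin : Pr {ω | ((m:ℝ) * ε) ^ 2 ≤ S ω ^ 2} ≠ ⊤ := measure_ne_top _ _
  have htr : (Pr {ω | ((m:ℝ) * ε) ^ 2 ≤ S ω ^ 2}).toReal ≤ 4 * b ^ 4 / (m * ε ^ 2) := by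
    have hpos : (0:ℝ) < ((m:ℝ) * ε) ^ 2 := by positivity
    rw [← le_div_iff₀' hpos] at hmarkov
    refine hmarkov.trans ?_
    rw [div_le_div_iff₀ hpos (by positivity)]
    calc (∫ ω, S ω ^ 2 ∂Pr) * (↑m * ε ^ 2) ≤ (m * (4 * b ^ 4)) * (↑m * ε ^ 2) := by
          refine mul_le_mul_of_nonneg_right hES (by positivity)
      _ = 4 * b ^ 4 * ((↑m * ε) ^ 2) := by ring
  calc Pr {ω | ε ≤ |(m : ℝ)⁻¹ * ∑ i ∈ Finset.range m, X i ω ^ 2 - v|}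
      ≤ Pr {ω | ((m:ℝ) * ε) ^ 2 ≤ S ω ^ 2} := measure_mono hevent
    _ = ENNReal.ofReal (Pr {ω | ((m:ℝ) * ε) ^ 2 ≤ S ω ^ 2}).toReal := by
        rw [ENNReal.ofReal_toReal hfin]
    _ ≤ ENNReal.ofReal (4 * b ^ 4 / (m * ε ^ 2)) := ENNReal.ofReal_le_ofReal htr


lemma continuous_designVec {P Q : ℕ} (z : EuclideanSpace ℝ (Fin Q)) :
    Continuous fun a : EuclideanSpace ℝ (Fin P) => designVec a z := by
  unfold designVec
  refine (Continuous.comp (EuclideanSpace.equiv (Fin (1 + P + Q)) ℝ).symm.continuous ?_)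
  refine continuous_pi fun i => ?_
  refine Fin.addCases (motive := fun i => Continuous fun a : EuclideanSpace ℝ (Fin P) =>
      Fin.append (Fin.append ![(1 : ℝ)] ((EuclideanSpace.equiv (Fin P) ℝ) a))
        ((EuclideanSpace.equiv (Fin Q) ℝ) z) i) ?_ ?_ i
  · intro i1
    simp only [Fin.append_left]
    refine Fin.addCases (motive := fun i1 => Continuous fun a : EuclideanSpace ℝ (Fin P) =>
        Fin.append ![(1 : ℝ)] ((EuclideanSpace.equiv (Fin P) ℝ) a) i1) ?_ ?_ i1
    · intro i0; simp only [Fin.append_left]; exact continuous_const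
    · intro ip; simp only [Fin.append_right]
      exact (continuous_apply ip).comp (EuclideanSpace.equiv (Fin P) ℝ).continuous
  · intro iq; simp only [Fin.append_right]; exact continuous_const

lemma tendsto_m_atTop {α : ℝ} {m : ℕ → ℕ} (hα : 0 < α)
    (hlim : Tendsto (fun n : ℕ => (m n : ℝ) / n) atTop (𝓝 α)) :
    Tendsto m atTop atTop := by
  rw [← tendsto_natCast_atTop_iff (R := ℝ)]
  have h1 : ∀ᶠ n : ℕ in atTop, α / 2 < (m n : ℝ) / n :=
    hlim.eventually (eventually_gt_nhds (by linarith))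
  have hbase : Tendsto (fun n : ℕ => α / 2 * n) atTop atTop :=
    Tendsto.const_mul_atTop (by linarith) tendsto_natCast_atTop_atTop
  refine tendsto_atTop_mono' _ ?_ hbase
  filter_upwards [h1, eventually_ge_atTop 1] with n hn hn1
  have hnpos : (0:ℝ) < n := by exact_mod_cast hn1
  rw [lt_div_iff₀ hnpos] at hn
  linarith

lemma tim_avg_sq' {Ω : Type} [MeasurableSpace Ω] {Pr : Measure Ω}
    {Y : ℕ → ℕ → Ω → ℝ} {b v : ℝ}
    {m : ℕ → ℕ} (hm : Tendsto m atTop atTop)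
    (hbound : ∀ n, ∀ ε : ℝ, 0 < ε → 1 ≤ m n →
      Pr {ω | ε ≤ |(m n : ℝ)⁻¹ * ∑ i ∈ Finset.range (m n), Y n i ω ^ 2 - v|}
        ≤ ENNReal.ofReal (4 * b ^ 4 / (m n * ε ^ 2))) :
    TendstoInMeasure Pr (fun n ω => (m n : ℝ)⁻¹ * ∑ i ∈ Finset.range (m n), Y n i ω ^ 2)
      atTop (fun _ => v) := by
  rw [tim_sub_iff]
  rw [tendstoInMeasure_iff_dist]
  intro ε hε
  have hub : Tendsto (fun n => ENNReal.ofReal (4 * b ^ 4 / (m n * ε ^ 2))) atTop (𝓝 0) := by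
    have hreal : Tendsto (fun n => 4 * b ^ 4 / (m n * ε ^ 2)) atTop (𝓝 0) := by
      have h2 : Tendsto (fun n => ((m n : ℝ))⁻¹) atTop (𝓝 0) :=
        tendsto_inv_atTop_zero.comp (tendsto_natCast_atTop_atTop.comp hm)
      have := h2.const_mul (4 * b ^ 4 / ε ^ 2)
      rw [mul_zero] at this
      refine this.congr fun n => ?_
      rw [div_mul_eq_div_div_swap, div_eq_mul_inv (4 * b ^ 4 / ε ^ 2)]
    have := ENNReal.tendsto_ofReal hreal
    rwa [ENNReal.ofReal_zero] at this
  refine tendsto_of_tendsto_of_tendsto_of_le_of_le' tendsto_const_nhds hub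
    (Eventually.of_forall fun n => zero_le) ?_
  filter_upwards [hm (eventually_ge_atTop 1)] with n hn1
  have hset : {x | ε ≤ dist ((m n : ℝ)⁻¹ * ∑ i ∈ Finset.range (m n), Y n i x ^ 2 - v) 0}
      = {ω | ε ≤ |(m n : ℝ)⁻¹ * ∑ i ∈ Finset.range (m n), Y n i ω ^ 2 - v|} := by
    simp [Real.dist_eq]
  exact hset ▸ hbound n ε hε hn1

variable {Ω : Type} [MeasurableSpace Ω] {Pr : Measure Ω} {J1 J2 P Q : ℕ}

lemma bound_nonneg [IsProbabilityMeasure Pr] (S : LagoSetup Ω Pr J1 J2 P Q) : 0 ≤ S.bound := by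
  have hne : Nonempty Ω := by
    by_contra h
    rw [not_nonempty_iff] at h
    have h1 : Pr Set.univ = 1 := measure_univ
    rw [Set.univ_eq_empty_iff.mpr h] at h1
    simp at h1
  obtain ⟨ω⟩ := hne
  have j : Fin J1 := ⟨0, S.hJ1⟩
  exact le_trans (abs_nonneg _) (S.ε1_bdd j 0 ω)

lemma n1_le (S : LagoSetup Ω Pr J1 J2 P Q) (n : ℕ) (j : Fin J1) : S.n1 n j ≤ n := by
  have h := S.sum_sizes n
  calc S.n1 n j ≤ ∑ j', S.n1 n j' :=
        Finset.single_le_sum (fun _ _ => Nat.zero_le _) (Finset.mem_univ j)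
    _ ≤ n := le_trans (Nat.le_add_right _ _) h.le

lemma n2_le (S : LagoSetup Ω Pr J1 J2 P Q) (n : ℕ) (j : Fin J2) : S.n2 n j ≤ n := by
  have h := S.sum_sizes n
  calc S.n2 n j ≤ ∑ j', S.n2 n j' :=
        Finset.single_le_sum (fun _ _ => Nat.zero_le _) (Finset.mem_univ j)
    _ ≤ n := le_trans (Nat.le_add_left _ _) h.le

lemma map_eps2 (S : LagoSetup Ω Pr J1 J2 P Q) (n : ℕ) :
    Measure.map (fun ω => fun p : Fin J2 × ℕ => S.ε2n n p.1 p.2 ω) Pr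
      = Measure.map (fun ω => fun p : Fin J2 × ℕ => S.ε2 p.1 p.2 ω) Pr := by
  have hproj : Measurable fun x : (Fin J1 × ℕ → ℝ) ×
      ((Fin J2 → EuclideanSpace ℝ (Fin P)) × (Fin J2 × ℕ → ℝ)) => x.2.2 :=
    measurable_snd.comp measurable_snd
  have hb1 : Measurable fun ω => ((fun p : Fin J1 × ℕ => S.ε1 p.1 p.2 ω),
      (fun j => S.A2 n j ω), (fun p : Fin J2 × ℕ => S.ε2n n p.1 p.2 ω)) :=
    Measurable.prodMk (measurable_pi_lambda _ fun p => S.meas_ε1 p.1 p.2)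
      (Measurable.prodMk (measurable_pi_lambda _ fun j => S.measA2 n j)
        (measurable_pi_lambda _ fun p => S.meas_ε2n n p.1 p.2))
  have hb2 : Measurable fun ω => ((fun p : Fin J1 × ℕ => S.ε1 p.1 p.2 ω),
      (fun j => S.A2 n j ω), (fun p : Fin J2 × ℕ => S.ε2 p.1 p.2 ω)) :=
    Measurable.prodMk (measurable_pi_lambda _ fun p => S.meas_ε1 p.1 p.2)
      (Measurable.prodMk (measurable_pi_lambda _ fun j => S.measA2 n j)
        (measurable_pi_lambda _ fun p => S.meas_ε2 p.1 p.2))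
  have h := S.jointLaw n
  calc Measure.map (fun ω => fun p : Fin J2 × ℕ => S.ε2n n p.1 p.2 ω) Pr
      = Measure.map (fun x : (Fin J1 × ℕ → ℝ) ×
            ((Fin J2 → EuclideanSpace ℝ (Fin P)) × (Fin J2 × ℕ → ℝ)) => x.2.2)
          (Measure.map (fun ω => ((fun p : Fin J1 × ℕ => S.ε1 p.1 p.2 ω),
            (fun j => S.A2 n j ω), (fun p : Fin J2 × ℕ => S.ε2n n p.1 p.2 ω))) Pr) :=
        (Measure.map_map hproj hb1).symm
    _ = Measure.map (fun x : (Fin J1 × ℕ → ℝ) ×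
            ((Fin J2 → EuclideanSpace ℝ (Fin P)) × (Fin J2 × ℕ → ℝ)) => x.2.2)
          (Measure.map (fun ω => ((fun p : Fin J1 × ℕ => S.ε1 p.1 p.2 ω),
            (fun j => S.A2 n j ω), (fun p : Fin J2 × ℕ => S.ε2 p.1 p.2 ω))) Pr) := by rw [h]
    _ = Measure.map (fun ω => fun p : Fin J2 × ℕ => S.ε2 p.1 p.2 ω) Pr :=
        Measure.map_map hproj hb2

lemma lln1 [IsProbabilityMeasure Pr] (S : LagoSetup Ω Pr J1 J2 P Q) (j : Fin J1) :
    TendstoInMeasure Pr (fun n ω =>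
        ((S.n1 n j : ℝ))⁻¹ * ∑ i ∈ Finset.range (S.n1 n j), S.ε1 j i ω ^ 2)
      atTop (fun _ => S.var1 j) := by
  refine tim_avg_sq' (Y := fun _ i => S.ε1 j i) (b := S.bound)
    (tendsto_m_atTop (S.α1_pos j) (S.α1_lim j)) ?_
  intro n ε hε hm
  refine cheb (fun i => S.meas_ε1 j i) (bound_nonneg S) (fun i ω => S.ε1_bdd j i ω)
    (fun i i' hne => ?_) (fun i => S.ε1_var j i) _ hm hε
  exact S.ε_indep.indepFun
    (show (Sum.inl (j, i) : (Fin J1 × ℕ) ⊕ (Fin J2 × ℕ)) ≠ Sum.inl (j, i') by simp [hne])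

lemma lln2 [IsProbabilityMeasure Pr] (S : LagoSetup Ω Pr J1 J2 P Q) (j : Fin J2) :
    TendstoInMeasure Pr (fun n ω =>
        ((S.n2 n j : ℝ))⁻¹ * ∑ i ∈ Finset.range (S.n2 n j), S.ε2n n j i ω ^ 2)
      atTop (fun _ => S.var2 j) := by
  refine tim_avg_sq' (Y := fun n i => S.ε2n n j i) (b := S.bound)
    (tendsto_m_atTop (S.α2_pos j) (S.α2_lim j)) ?_
  intro n ε hε hm
  set m := S.n2 n j with hmdef
  have hA : MeasurableSet {y : Fin J2 × ℕ → ℝ |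
      ε ≤ |(m : ℝ)⁻¹ * ∑ i ∈ Finset.range m, y (j, i) ^ 2 - S.var2 j|} := by
    refine measurableSet_le measurable_const ?_
    refine Measurable.abs ?_
    refine Measurable.sub ?_ measurable_const
    exact measurable_const.mul
      (Finset.measurable_sum _ fun i _ => (measurable_pi_apply (j, i)).pow_const 2)
  have hT1 : Measurable fun ω => (fun p : Fin J2 × ℕ => S.ε2n n p.1 p.2 ω) :=
    measurable_pi_lambda _ fun p => S.meas_ε2n n p.1 p.2
  have hT2 : Measurable fun ω => (fun p : Fin J2 × ℕ => S.ε2 p.1 p.2 ω) :=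
    measurable_pi_lambda _ fun p => S.meas_ε2 p.1 p.2
  have heq : Pr {ω | ε ≤ |(m : ℝ)⁻¹ * ∑ i ∈ Finset.range m, S.ε2n n j i ω ^ 2 - S.var2 j|}
      = Pr {ω | ε ≤ |(m : ℝ)⁻¹ * ∑ i ∈ Finset.range m, S.ε2 j i ω ^ 2 - S.var2 j|} := by
    calc Pr {ω | ε ≤ |(m : ℝ)⁻¹ * ∑ i ∈ Finset.range m, S.ε2n n j i ω ^ 2 - S.var2 j|}
        = Measure.map (fun ω => fun p : Fin J2 × ℕ => S.ε2n n p.1 p.2 ω) Pr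
            {y | ε ≤ |(m : ℝ)⁻¹ * ∑ i ∈ Finset.range m, y (j, i) ^ 2 - S.var2 j|} :=
          (Measure.map_apply hT1 hA).symm
      _ = Measure.map (fun ω => fun p : Fin J2 × ℕ => S.ε2 p.1 p.2 ω) Pr
            {y | ε ≤ |(m : ℝ)⁻¹ * ∑ i ∈ Finset.range m, y (j, i) ^ 2 - S.var2 j|} := by
          rw [map_eps2 S n]
      _ = Pr {ω | ε ≤ |(m : ℝ)⁻¹ * ∑ i ∈ Finset.range m, S.ε2 j i ω ^ 2 - S.var2 j|} :=
          Measure.map_apply hT2 hA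
  rw [heq]
  refine cheb (fun i => S.meas_ε2 j i) (bound_nonneg S) (fun i ω => S.ε2_bdd j i ω)
    (fun i i' hne => ?_) (fun i => S.ε2_var j i) _ hm hε
  exact S.ε_indep.indepFun
    (show (Sum.inr (j, i) : (Fin J1 × ℕ) ⊕ (Fin J2 × ℕ)) ≠ Sum.inr (j, i') by simp [hne])

lemma sum_sq_expand (m : ℕ) (f : ℕ → ℝ) (c : ℝ) :
    ∑ i ∈ Finset.range m, (f i + c) ^ 2
      = (∑ i ∈ Finset.range m, f i ^ 2) + 2 * c * (∑ i ∈ Finset.range m, f i)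
        + (m : ℝ) * c ^ 2 := by
  have h1 : ∑ i ∈ Finset.range m, (f i + c) ^ 2
      = ∑ i ∈ Finset.range m, (f i ^ 2 + 2 * c * f i + c ^ 2) :=
    Finset.sum_congr rfl fun i _ => by ring
  rw [h1, Finset.sum_add_distrib, Finset.sum_add_distrib, ← Finset.mul_sum,
    Finset.sum_const, Finset.card_range, nsmul_eq_mul]

lemma inv_cast_mul_le_one {m n : ℕ} (h : m ≤ n) : (n : ℝ)⁻¹ * (m : ℝ) ≤ 1 := by
  rcases Nat.eq_zero_or_pos n with h0 | hpos
  · subst h0; simp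
  · have hn : (0:ℝ) < n := by exact_mod_cast hpos
    rw [inv_mul_eq_div, div_le_one hn]
    exact_mod_cast h

lemma frac_abs_le_one {m n : ℕ} (h : m ≤ n) : |(m : ℝ) / n| ≤ 1 := by
  rw [div_eq_inv_mul, abs_of_nonneg (by positivity)]
  exact inv_cast_mul_le_one h

lemma frac_avg {m n : ℕ} (hmn : m ≤ n) (s : ℝ) (hs : m = 0 → s = 0) :
    ((m : ℝ) / n) * ((m : ℝ)⁻¹ * s) = (n : ℝ)⁻¹ * s := by
  rcases Nat.eq_zero_or_pos m with h0 | hpos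
  · simp [h0, hs h0]
  · have hm0 : (m : ℝ) ≠ 0 := Nat.cast_ne_zero.mpr (by omega)
    have hn0 : (n : ℝ) ≠ 0 := Nat.cast_ne_zero.mpr (by omega)
    field_simp

lemma tim_V_term {Ω : Type} [MeasurableSpace Ω] {Pr : Measure Ω}
    {c d : ℕ → Ω → ℝ} {e : ℕ → ℕ → Ω → ℝ} {m : ℕ → ℕ}
    {cstar Mc Md b av vv : ℝ}
    (hMc : 0 < Mc) (hMd : 0 < Md) (hb : 0 ≤ b)
    (hcb : ∀ n ω, |c n ω| ≤ Mc) (hdb : ∀ n ω, |d n ω| ≤ Md)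
    (heb : ∀ n i ω, |e n i ω| ≤ b)
    (hmn : ∀ n, m n ≤ n)
    (hc : TendstoInMeasure Pr c atTop (fun _ => cstar))
    (hd : TendstoInMeasure Pr d atTop (fun _ => (0 : ℝ)))
    (hfrac : Tendsto (fun n : ℕ => (m n : ℝ) / n) atTop (𝓝 av))
    (havg : TendstoInMeasure Pr
      (fun n ω => (m n : ℝ)⁻¹ * ∑ i ∈ Finset.range (m n), e n i ω ^ 2)
      atTop (fun _ => vv)) :
    TendstoInMeasure Pr
      (fun (n : ℕ) (ω : Ω) => (n : ℝ)⁻¹ * (c n ω * ∑ i ∈ Finset.range (m n), (e n i ω + d n ω) ^ 2))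
      atTop (fun _ => cstar * (av * vv)) := by
  have hsumabs : ∀ (n : ℕ) (ω : Ω), |(n : ℝ)⁻¹ * ∑ i ∈ Finset.range (m n), e n i ω| ≤ b := by
    intro n ω
    have hs : |∑ i ∈ Finset.range (m n), e n i ω| ≤ (m n : ℝ) * b := by
      refine (Finset.abs_sum_le_sum_abs _ _).trans ?_
      calc ∑ i ∈ Finset.range (m n), |e n i ω| ≤ ∑ _i ∈ Finset.range (m n), b :=
            Finset.sum_le_sum fun i _ => heb n i ω
        _ = (m n : ℝ) * b := by rw [Finset.sum_const, Finset.card_range, nsmul_eq_mul]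
    rw [abs_mul, abs_of_nonneg (by positivity : (0:ℝ) ≤ (n:ℝ)⁻¹)]
    calc (n:ℝ)⁻¹ * |∑ i ∈ Finset.range (m n), e n i ω| ≤ (n:ℝ)⁻¹ * ((m n : ℝ) * b) := by
          exact mul_le_mul_of_nonneg_left hs (by positivity)
      _ = ((n:ℝ)⁻¹ * (m n : ℝ)) * b := by ring
      _ ≤ 1 * b := mul_le_mul_of_nonneg_right (inv_cast_mul_le_one (hmn n)) hb
      _ = b := one_mul b
  have hE1 : TendstoInMeasure Pr
      (fun n ω => c n ω * ((n : ℝ)⁻¹ * ∑ i ∈ Finset.range (m n), e n i ω ^ 2))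
      atTop (fun _ => cstar * (av * vv)) := by
    refine tim_mul hMc hcb hc ?_
    have h1 := tim_mul (M := 1) one_pos (fun n (_ : Ω) => frac_abs_le_one (hmn n))
      (tim_const_seq hfrac) havg
    have hfun : (fun n (ω : Ω) => ((m n : ℝ) / n) *
        ((m n : ℝ)⁻¹ * ∑ i ∈ Finset.range (m n), e n i ω ^ 2))
        = fun (n : ℕ) (ω : Ω) => (n : ℝ)⁻¹ * ∑ i ∈ Finset.range (m n), e n i ω ^ 2 := by
      funext n ω
      exact frac_avg (hmn n) _ (fun h0 => by rw [h0]; simp)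
    rwa [hfun] at h1
  have hE2 : TendstoInMeasure Pr
      (fun n ω => c n ω * (2 * d n ω) * ((n : ℝ)⁻¹ * ∑ i ∈ Finset.range (m n), e n i ω))
      atTop (fun _ => (0 : ℝ)) := by
    refine tim0_of_le (C := 2 * Mc * b + 1) (by positivity) hd fun n ω => ?_
    rw [abs_mul, abs_mul, abs_mul]
    have h2 : |(2:ℝ)| = 2 := by norm_num
    calc |c n ω| * (|(2:ℝ)| * |d n ω|) * |(n : ℝ)⁻¹ * ∑ i ∈ Finset.range (m n), e n i ω|
        ≤ Mc * (2 * |d n ω|) * b := by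
          rw [h2]
          refine mul_le_mul ?_ (hsumabs n ω) (abs_nonneg _) (by positivity)
          exact mul_le_mul_of_nonneg_right (hcb n ω) (by positivity)
      _ ≤ (2 * Mc * b + 1) * |d n ω| := by nlinarith [abs_nonneg (d n ω)]
  have hE3 : TendstoInMeasure Pr
      (fun n ω => c n ω * d n ω ^ 2 * ((m n : ℝ) / n)) atTop (fun _ => (0 : ℝ)) := by
    refine tim0_of_le (C := Mc * Md + 1) (by positivity) hd fun n ω => ?_
    rw [abs_mul, abs_mul]
    have habs : |d n ω ^ 2| = |d n ω| * |d n ω| := by rw [abs_pow]; ring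
    calc |c n ω| * |d n ω ^ 2| * |(m n : ℝ) / n|
        ≤ Mc * (Md * |d n ω|) * 1 := by
          refine mul_le_mul ?_ (frac_abs_le_one (hmn n)) (abs_nonneg _) (by positivity)
          refine mul_le_mul (hcb n ω) ?_ (abs_nonneg _) (le_of_lt hMc)
          rw [habs]
          exact mul_le_mul_of_nonneg_right (hdb n ω) (abs_nonneg _)
      _ ≤ (Mc * Md + 1) * |d n ω| := by nlinarith [abs_nonneg (d n ω)]
  have hsum := tim_add (tim_add hE1 hE2) hE3
  have hlim : (fun _ : Ω => cstar * (av * vv) + 0 + 0) = fun _ : Ω => cstar * (av * vv) := by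
    funext; ring
  rw [hlim] at hsum
  have hfun : (fun (n : ℕ) (ω : Ω) =>
      c n ω * ((n : ℝ)⁻¹ * ∑ i ∈ Finset.range (m n), e n i ω ^ 2)
      + c n ω * (2 * d n ω) * ((n : ℝ)⁻¹ * ∑ i ∈ Finset.range (m n), e n i ω)
      + c n ω * d n ω ^ 2 * ((m n : ℝ) / n))
      = fun (n : ℕ) (ω : Ω) => (n : ℝ)⁻¹ * (c n ω * ∑ i ∈ Finset.range (m n), (e n i ω + d n ω) ^ 2) := by
    funext n ω
    rw [sum_sq_expand (m n) (fun i => e n i ω) (d n ω)]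
    field_simp
  rwa [hfun] at hsum

end LagoAux

set_option maxHeartbeats 2000000 in
/-- **Consistency of the sandwich variance estimator:** for B-valued random vectors
β̂_n → β* in probability, the plug-in estimators Ĵ_n and V̂_n converge entrywise in
probability to J(β*) and V(β*). -/
theorem lago_sandwich_consistency
    {Ω : Type} [MeasurableSpace Ω] {Pr : Measure Ω} [IsProbabilityMeasure Pr]
    {J1 J2 P Q : ℕ} (S : LagoSetup Ω Pr J1 J2 P Q)
    (βhat : ℕ → Ω → EuclideanSpace ℝ (Fin (1 + P + Q)))
    (hβmeas : ∀ n, Measurable (βhat n))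
    (hβmem : ∀ n ω, βhat n ω ∈ S.B)
    (hβcons : TendstoInMeasure Pr (fun n ω => βhat n ω) atTop (fun _ => S.βstar)) :
    (∀ p q : Fin (1 + P + Q),
      TendstoInMeasure Pr
        (fun (n : ℕ) ω =>
          (∑ j, ((S.n1 n j : ℝ) / n) *
            (deriv S.h ⟪βhat n ω, S.x1v j⟫) ^ 2 * (S.x1v j p * S.x1v j q)) +
          (∑ j, ((S.n2 n j : ℝ) / n) *
            (deriv S.h ⟪βhat n ω, S.X2v n j ω⟫) ^ 2 * (S.X2v n j ω p * S.X2v n j ω q)))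
        atTop (fun _ => S.Jmat p q)) ∧
    (∀ p q : Fin (1 + P + Q),
      TendstoInMeasure Pr
        (fun (n : ℕ) ω =>
          (n : ℝ)⁻¹ *
            ((∑ j, (deriv S.h ⟪βhat n ω, S.x1v j⟫) ^ 2 * (S.x1v j p * S.x1v j q) *
                ∑ i ∈ Finset.range (S.n1 n j),
                  (S.h ⟪S.βstar, S.x1v j⟫ + S.ε1 j i ω - S.h ⟪βhat n ω, S.x1v j⟫) ^ 2) +
              (∑ j, (deriv S.h ⟪βhat n ω, S.X2v n j ω⟫) ^ 2 *
                  (S.X2v n j ω p * S.X2v n j ω q) *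
                ∑ i ∈ Finset.range (S.n2 n j),
                  (S.h ⟪S.βstar, S.X2v n j ω⟫ + S.ε2n n j i ω -
                    S.h ⟪βhat n ω, S.X2v n j ω⟫) ^ 2)))
        atTop (fun _ => S.Vmat p q)) := by
  classical
  have hb0 : 0 ≤ S.bound := LagoAux.bound_nonneg S
  have hdC : Continuous (deriv S.h) := S.h_smooth.continuous_deriv (by norm_num)
  have hhC : Continuous S.h := S.h_smooth.continuous
  have hEval : ∀ r : Fin (1 + P + Q), Continuous fun v : EuclideanSpace ℝ (Fin (1 + P + Q)) => v r :=
    fun r => (continuous_apply r).comp (EuclideanSpace.equiv (Fin (1 + P + Q)) ℝ).continuous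
  have hK2 : IsCompact (S.B ×ˢ Metric.closedBall (0 : EuclideanSpace ℝ (Fin P)) S.bound) :=
    S.B_compact.prod (isCompact_closedBall _ _)
  have hmem2 : ∀ n ω, (βhat n ω, S.A2 n ⟨0, S.hJ2⟩ ω) ∈
      S.B ×ˢ Metric.closedBall (0 : EuclideanSpace ℝ (Fin P)) S.bound := fun n ω =>
    Set.mk_mem_prod (hβmem n ω)
      (by rw [Metric.mem_closedBall, dist_zero_right]; exact S.A2_bdd n _ ω)
  constructor
  · -- J part
    intro p q
    have h1 : TendstoInMeasure Pr
        (fun (n : ℕ) (ω : Ω) => ∑ j : Fin J1, ((S.n1 n j : ℝ) / n) *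
          ((deriv S.h ⟪βhat n ω, S.x1v j⟫) ^ 2 * (S.x1v j p * S.x1v j q)))
        atTop (fun _ => ∑ j : Fin J1, S.α1 j *
          ((deriv S.h ⟪S.βstar, S.x1v j⟫) ^ 2 * (S.x1v j p * S.x1v j q))) := by
      refine LagoAux.tim_sum Finset.univ fun j _ => ?_
      have hφC : Continuous (fun β : EuclideanSpace ℝ (Fin (1 + P + Q)) =>
          (deriv S.h ⟪β, S.x1v j⟫) ^ 2 * (S.x1v j p * S.x1v j q)) :=
        ((hdC.comp (Continuous.inner continuous_id continuous_const)).pow 2).mul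
          continuous_const
      exact LagoAux.tim_mul one_pos
        (fun n (_ : Ω) => LagoAux.frac_abs_le_one (LagoAux.n1_le S n j))
        (LagoAux.tim_const_seq (S.α1_lim j)) (LagoAux.tim_comp hβcons hφC.continuousAt)
    have h2 : TendstoInMeasure Pr
        (fun (n : ℕ) (ω : Ω) => ∑ j : Fin J2, ((S.n2 n j : ℝ) / n) *
          ((deriv S.h ⟪βhat n ω, designVec (S.A2 n j ω) (S.z2 j)⟫) ^ 2 *
            (designVec (S.A2 n j ω) (S.z2 j) p * designVec (S.A2 n j ω) (S.z2 j) q)))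
        atTop (fun _ => ∑ j : Fin J2, S.α2 j *
          ((deriv S.h ⟪S.βstar, designVec (S.a2 j) (S.z2 j)⟫) ^ 2 *
            (designVec (S.a2 j) (S.z2 j) p * designVec (S.a2 j) (S.z2 j) q))) := by
      refine LagoAux.tim_sum Finset.univ fun j _ => ?_
      have hxC : Continuous fun x : EuclideanSpace ℝ (Fin (1 + P + Q)) ×
          EuclideanSpace ℝ (Fin P) => designVec x.2 (S.z2 j) :=
        (LagoAux.continuous_designVec (S.z2 j)).comp continuous_snd
      have hψC : Continuous fun x : EuclideanSpace ℝ (Fin (1 + P + Q)) ×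
          EuclideanSpace ℝ (Fin P) =>
          (deriv S.h ⟪x.1, designVec x.2 (S.z2 j)⟫) ^ 2 *
            (designVec x.2 (S.z2 j) p * designVec x.2 (S.z2 j) q) :=
        ((hdC.comp (Continuous.inner continuous_fst hxC)).pow 2).mul
          (((hEval p).comp hxC).mul ((hEval q).comp hxC))
      have hpair := LagoAux.tim_prodMk hβcons (S.A2_tendsto j)
      exact LagoAux.tim_mul one_pos
        (fun n (_ : Ω) => LagoAux.frac_abs_le_one (LagoAux.n2_le S n j))
        (LagoAux.tim_const_seq (S.α2_lim j)) (LagoAux.tim_comp hpair hψC.continuousAt)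
    have hJ := LagoAux.tim_add h1 h2
    convert hJ using 1
    · funext n ω
      simp only [LagoSetup.X2v]
      congr 1 <;> refine Finset.sum_congr rfl fun j _ => by ring
    · funext ω
      simp only [LagoSetup.Jmat, Matrix.of_apply, LagoSetup.x2v]
      congr 1 <;> refine Finset.sum_congr rfl fun j _ => by ring
  · -- V part
    intro p q
    have h1 : TendstoInMeasure Pr
        (fun (n : ℕ) (ω : Ω) => ∑ j : Fin J1, (n : ℝ)⁻¹ *
          ((deriv S.h ⟪βhat n ω, S.x1v j⟫) ^ 2 * (S.x1v j p * S.x1v j q) *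
            ∑ i ∈ Finset.range (S.n1 n j),
              (S.ε1 j i ω + (S.h ⟪S.βstar, S.x1v j⟫ - S.h ⟪βhat n ω, S.x1v j⟫)) ^ 2))
        atTop (fun _ => ∑ j : Fin J1,
          (deriv S.h ⟪S.βstar, S.x1v j⟫) ^ 2 * (S.x1v j p * S.x1v j q) *
            (S.α1 j * S.var1 j)) := by
      refine LagoAux.tim_sum Finset.univ fun j _ => ?_
      have hφC : Continuous (fun β : EuclideanSpace ℝ (Fin (1 + P + Q)) =>
          (deriv S.h ⟪β, S.x1v j⟫) ^ 2 * (S.x1v j p * S.x1v j q)) :=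
        ((hdC.comp (Continuous.inner continuous_id continuous_const)).pow 2).mul
          continuous_const
      have hΔC : Continuous (fun β : EuclideanSpace ℝ (Fin (1 + P + Q)) =>
          S.h ⟪S.βstar, S.x1v j⟫ - S.h ⟪β, S.x1v j⟫) :=
        continuous_const.sub (hhC.comp (Continuous.inner continuous_id continuous_const))
      obtain ⟨Mc, hMc⟩ := S.B_compact.exists_bound_of_continuousOn hφC.continuousOn
      obtain ⟨Md, hMd⟩ := S.B_compact.exists_bound_of_continuousOn hΔC.continuousOn
      have hd : TendstoInMeasure Pr
          (fun n ω => S.h ⟪S.βstar, S.x1v j⟫ - S.h ⟪βhat n ω, S.x1v j⟫)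
          atTop (fun _ => (0 : ℝ)) := by
        have := LagoAux.tim_comp hβcons hΔC.continuousAt
        rwa [show (fun _ : Ω => S.h ⟪S.βstar, S.x1v j⟫ - S.h ⟪S.βstar, S.x1v j⟫)
          = fun _ : Ω => (0 : ℝ) from funext fun _ => sub_self _] at this
      refine LagoAux.tim_V_term (Mc := |Mc| + 1) (Md := |Md| + 1)
        (by positivity) (by positivity) hb0
        (fun n ω => ?_) (fun n ω => ?_) (fun n i ω => S.ε1_bdd j i ω)
        (fun n => LagoAux.n1_le S n j)
        (LagoAux.tim_comp hβcons hφC.continuousAt) hd (S.α1_lim j) (LagoAux.lln1 S j)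
      · calc |(deriv S.h ⟪βhat n ω, S.x1v j⟫) ^ 2 * (S.x1v j p * S.x1v j q)|
            ≤ Mc := by rw [← Real.norm_eq_abs]; exact hMc _ (hβmem n ω)
          _ ≤ |Mc| + 1 := (le_abs_self Mc).trans (by linarith)
      · calc |S.h ⟪S.βstar, S.x1v j⟫ - S.h ⟪βhat n ω, S.x1v j⟫|
            ≤ Md := by rw [← Real.norm_eq_abs]; exact hMd _ (hβmem n ω)
          _ ≤ |Md| + 1 := (le_abs_self Md).trans (by linarith)
    have h2 : TendstoInMeasure Pr
        (fun (n : ℕ) (ω : Ω) => ∑ j : Fin J2, (n : ℝ)⁻¹ *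
          ((deriv S.h ⟪βhat n ω, designVec (S.A2 n j ω) (S.z2 j)⟫) ^ 2 *
            (designVec (S.A2 n j ω) (S.z2 j) p * designVec (S.A2 n j ω) (S.z2 j) q) *
            ∑ i ∈ Finset.range (S.n2 n j),
              (S.ε2n n j i ω +
                (S.h ⟪S.βstar, designVec (S.A2 n j ω) (S.z2 j)⟫ -
                  S.h ⟪βhat n ω, designVec (S.A2 n j ω) (S.z2 j)⟫)) ^ 2))
        atTop (fun _ => ∑ j : Fin J2,
          (deriv S.h ⟪S.βstar, designVec (S.a2 j) (S.z2 j)⟫) ^ 2 *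
            (designVec (S.a2 j) (S.z2 j) p * designVec (S.a2 j) (S.z2 j) q) *
            (S.α2 j * S.var2 j)) := by
      refine LagoAux.tim_sum Finset.univ fun j _ => ?_
      have hxC : Continuous fun x : EuclideanSpace ℝ (Fin (1 + P + Q)) ×
          EuclideanSpace ℝ (Fin P) => designVec x.2 (S.z2 j) :=
        (LagoAux.continuous_designVec (S.z2 j)).comp continuous_snd
      have hψC : Continuous fun x : EuclideanSpace ℝ (Fin (1 + P + Q)) ×
          EuclideanSpace ℝ (Fin P) =>
          (deriv S.h ⟪x.1, designVec x.2 (S.z2 j)⟫) ^ 2 *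
            (designVec x.2 (S.z2 j) p * designVec x.2 (S.z2 j) q) :=
        ((hdC.comp (Continuous.inner continuous_fst hxC)).pow 2).mul
          (((hEval p).comp hxC).mul ((hEval q).comp hxC))
      have hΔC : Continuous fun x : EuclideanSpace ℝ (Fin (1 + P + Q)) ×
          EuclideanSpace ℝ (Fin P) =>
          S.h ⟪S.βstar, designVec x.2 (S.z2 j)⟫ - S.h ⟪x.1, designVec x.2 (S.z2 j)⟫ :=
        (hhC.comp (Continuous.inner continuous_const hxC)).sub
          (hhC.comp (Continuous.inner continuous_fst hxC))
      obtain ⟨Mc, hMc⟩ := hK2.exists_bound_of_continuousOn hψC.continuousOn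
      obtain ⟨Md, hMd⟩ := hK2.exists_bound_of_continuousOn hΔC.continuousOn
      have hpair := LagoAux.tim_prodMk hβcons (S.A2_tendsto j)
      have hmemj : ∀ n ω, (βhat n ω, S.A2 n j ω) ∈
          S.B ×ˢ Metric.closedBall (0 : EuclideanSpace ℝ (Fin P)) S.bound := fun n ω =>
        Set.mk_mem_prod (hβmem n ω)
          (by rw [Metric.mem_closedBall, dist_zero_right]; exact S.A2_bdd n j ω)
      have hd : TendstoInMeasure Pr
          (fun n ω => S.h ⟪S.βstar, designVec (S.A2 n j ω) (S.z2 j)⟫ -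
            S.h ⟪βhat n ω, designVec (S.A2 n j ω) (S.z2 j)⟫)
          atTop (fun _ => (0 : ℝ)) := by
        have := LagoAux.tim_comp hpair hΔC.continuousAt
        rwa [show (fun _ : Ω => S.h ⟪S.βstar, designVec (S.a2 j) (S.z2 j)⟫
            - S.h ⟪S.βstar, designVec (S.a2 j) (S.z2 j)⟫)
          = fun _ : Ω => (0 : ℝ) from funext fun _ => sub_self _] at this
      refine LagoAux.tim_V_term (Mc := |Mc| + 1) (Md := |Md| + 1)
        (by positivity) (by positivity) hb0
        (fun n ω => ?_) (fun n ω => ?_) (fun n i ω => S.ε2n_bdd n j i ω)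
        (fun n => LagoAux.n2_le S n j)
        (LagoAux.tim_comp hpair hψC.continuousAt) hd (S.α2_lim j) (LagoAux.lln2 S j)
      · calc |(deriv S.h ⟪βhat n ω, designVec (S.A2 n j ω) (S.z2 j)⟫) ^ 2 *
              (designVec (S.A2 n j ω) (S.z2 j) p * designVec (S.A2 n j ω) (S.z2 j) q)|
            ≤ Mc := by rw [← Real.norm_eq_abs]; exact hMc (βhat n ω, S.A2 n j ω) (hmemj n ω)
          _ ≤ |Mc| + 1 := (le_abs_self Mc).trans (by linarith)
      · calc |S.h ⟪S.βstar, designVec (S.A2 n j ω) (S.z2 j)⟫ -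
              S.h ⟪βhat n ω, designVec (S.A2 n j ω) (S.z2 j)⟫|
            ≤ Md := by rw [← Real.norm_eq_abs]; exact hMd (βhat n ω, S.A2 n j ω) (hmemj n ω)
          _ ≤ |Md| + 1 := (le_abs_self Md).trans (by linarith)
    have hV := LagoAux.tim_add h1 h2
    convert hV using 1
    · funext n ω
      simp only [LagoSetup.X2v]
      rw [mul_add, Finset.mul_sum, Finset.mul_sum]
      congr 1 <;> refine Finset.sum_congr rfl fun j _ => ?_
      · congr 2
        refine Finset.sum_congr rfl fun i _ => by ring
      · congr 2
        refine Finset.sum_congr rfl fun i _ => by ring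
    · funext ω
      simp only [LagoSetup.Vmat, Matrix.of_apply, LagoSetup.x2v]
      congr 1 <;> refine Finset.sum_congr rfl fun j _ => by ring


end
end
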